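/- arXiv:2107.12022 — 9 statements merged into one kernel-verified Lean document; each statement's English description precedes it below -/
import Mathlib

section
/- Let G be a connected undirected graph on n vertices with nonnegative edge weights, L its Laplacian, and D a nonzero diagonal matrix with entries in {0,1} (at least one entry equal to 1). Then the smallest eigenvalue of L + D is a simple eigenvalue and its corresponding eigenvector can be chosen to have all entries strictly positive. -/
open Matrix

def lapW {n : ℕ} (W : Matrix (Fin n) (Fin n) ℝ) : Matrix (Fin n) (Fin n) ℝ :=
  Matrix.diagonal (fun i => ∑ j, W i j) - W

def connectedW {n : ℕ} (W : Matrix (Fin n) (Fin n) ℝ) : Prop :=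
  ∀ i j : Fin n, Relation.ReflTransGen (fun a b => W a b ≠ 0) i j

/-!
`A = L + D` is a symmetric matrix with nonpositive off-diagonal entries whose nonzero pattern
is connected. Let `μ` be the minimum of the Rayleigh quotient of `A`, so that every `z` with `z ⬝ᵥ A *ᵥ z = μ * (z ⬝ᵥ z)` is a `μ`-eigenvector. Nonpositive off-diagonal entries give
`|z| ⬝ᵥ A *ᵥ |z| ≤ z ⬝ᵥ A *ᵥ z`, so with `z` also `|z|` is a `μ`-eigenvector. A nonnegative
eigenvector vanishing at one vertex vanishes at all its neighbours, hence everywhere by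
connectedness; so `|z| > 0` for every nonzero `μ`-eigenvector `z`. Simplicity follows: if `v > 0`
and `w` are `μ`-eigenvectors, then `w - (w i / v i) • v` is one too and vanishes at `i`, so it
is zero.
-/

section
variable {ι : Type*} [Fintype ι] {A : Matrix ι ι ℝ}

lemma dotProduct_self_pos {x : ι → ℝ} (hx : x ≠ 0) : 0 < x ⬝ᵥ x := by
  simpa only [star_trivial] using dotProduct_star_self_pos_iff.mpr hx

lemma abs_dotProduct_abs (x : ι → ℝ) : |x| ⬝ᵥ |x| = x ⬝ᵥ x := by
  simp only [dotProduct, Pi.abs_apply, abs_mul_abs_self]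

lemma exists_min_rayleigh [Nonempty ι] (A : Matrix ι ι ℝ) :
    ∃ (μ : ℝ) (x : ι → ℝ), x ≠ 0 ∧ x ⬝ᵥ A *ᵥ x = μ * (x ⬝ᵥ x) ∧
      ∀ z, μ * (z ⬝ᵥ z) ≤ z ⬝ᵥ A *ᵥ z := by
  set R : (ι → ℝ) → ℝ := fun z => (z ⬝ᵥ A *ᵥ z) / (z ⬝ᵥ z)
  have hR_smul : ∀ (c : ℝ) (z : ι → ℝ), c ≠ 0 → R (c • z) = R z := by
    intro c z hc
    simp only [R, mulVec_smul, smul_dotProduct, dotProduct_smul, smul_eq_mul]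
    rw [mul_div_mul_left _ _ hc, mul_div_mul_left _ _ hc]
  have hne : ∀ z ∈ Metric.sphere (0 : ι → ℝ) 1, z ≠ 0 := fun z hz =>
    ne_zero_of_mem_unit_sphere ⟨z, hz⟩
  have hcont : ContinuousOn R (Metric.sphere 0 1) :=
    ContinuousOn.div (by fun_prop) (by fun_prop) fun z hz => (dotProduct_self_pos (hne z hz)).ne'
  obtain ⟨x, hx, hmin⟩ := (isCompact_sphere (0 : ι → ℝ) 1).exists_isMinOn
    (NormedSpace.sphere_nonempty.mpr zero_le_one) hcont
  refine ⟨R x, x, hne x hx, (div_mul_cancel₀ _ (dotProduct_self_pos (hne x hx)).ne').symm, ?_⟩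
  intro z
  rcases eq_or_ne z 0 with rfl | hz
  · simp
  have hz' : ‖z‖⁻¹ • z ∈ Metric.sphere (0 : ι → ℝ) 1 := by
    simp [norm_smul, norm_ne_zero_iff.mpr hz]
  rw [← le_div_iff₀ (dotProduct_self_pos hz)]
  calc R x ≤ R (‖z‖⁻¹ • z) := hmin hz'
    _ = R z := hR_smul _ z (inv_ne_zero (norm_ne_zero_iff.mpr hz))

lemma mulVec_eq_smul_of_dotProduct_mulVec_eq (hA : A.IsSymm) {μ : ℝ}
    (hμ : ∀ z, μ * (z ⬝ᵥ z) ≤ z ⬝ᵥ A *ᵥ z) {x : ι → ℝ} (hx : x ⬝ᵥ A *ᵥ x = μ * (x ⬝ᵥ x)) :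
    A *ᵥ x = μ • x := by
  classical
  have hmulVec : ∀ z, (A - μ • 1) *ᵥ z = A *ᵥ z - μ • z := fun z => by
    rw [sub_mulVec, smul_mulVec, one_mulVec]
  have hpsd : (A - μ • 1).PosSemidef := by
    refine .of_dotProduct_mulVec_nonneg ?_ fun z => ?_
    · exact isHermitian_iff_isSymm.mpr (hA.sub (isSymm_one.smul μ))
    · rw [star_trivial, hmulVec, dotProduct_sub, dotProduct_smul, smul_eq_mul, sub_nonneg]
      exact hμ z
  have := (hpsd.dotProduct_mulVec_zero_iff x).mp (by
    rw [star_trivial, hmulVec, dotProduct_sub, dotProduct_smul, smul_eq_mul, hx, sub_self])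
  rwa [hmulVec, sub_eq_zero] at this

lemma abs_dotProduct_mulVec_abs_le (hA : ∀ i j, i ≠ j → A i j ≤ 0) (x : ι → ℝ) :
    |x| ⬝ᵥ A *ᵥ |x| ≤ x ⬝ᵥ A *ᵥ x := by
  simp only [dotProduct, mulVec, Finset.mul_sum, Pi.abs_apply]
  refine Finset.sum_le_sum fun i _ => Finset.sum_le_sum fun j _ => ?_
  rcases eq_or_ne i j with rfl | hij
  · rw [mul_left_comm, abs_mul_abs_self, mul_left_comm]
  · have : x i * x j ≤ |x i| * |x j| := by rw [← abs_mul]; exact le_abs_self _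
    nlinarith [hA i j hij]

lemma eq_zero_of_mulVec_eq_smul_of_nonneg (hA : ∀ i j, i ≠ j → A i j ≤ 0)
    (hirr : ∀ i j, Relation.ReflTransGen (fun a b => A a b ≠ 0) i j) {μ : ℝ} {z : ι → ℝ}
    (hz : A *ᵥ z = μ • z) (hnonneg : 0 ≤ z) {i : ι} (hi : z i = 0) : z = 0 := by
  have step : ∀ a b, z a = 0 → A a b ≠ 0 → z b = 0 := by
    intro a b ha hab
    have hterm : ∀ j ∈ Finset.univ, A a j * z j ≤ 0 := fun j _ => by
      rcases eq_or_ne a j with rfl | haj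
      · rw [ha, mul_zero]
      · exact mul_nonpos_of_nonpos_of_nonneg (hA a j haj) (hnonneg j)
    have hsum : ∑ j, A a j * z j = 0 := by
      simpa [mulVec, dotProduct, ha] using congrFun hz a
    have := (Finset.sum_eq_zero_iff_of_nonpos hterm).mp hsum b (Finset.mem_univ b)
    exact (mul_eq_zero.mp this).resolve_left hab
  funext j
  induction hirr i j with
  | refl => exact hi
  | tail _ hab ih => exact step _ _ ih hab

lemma mulVec_abs_eq_smul_abs (hsym : A.IsSymm) (hA : ∀ i j, i ≠ j → A i j ≤ 0) {μ : ℝ}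
    (hμ : ∀ z, μ * (z ⬝ᵥ z) ≤ z ⬝ᵥ A *ᵥ z) {z : ι → ℝ} (hz : A *ᵥ z = μ • z) :
    A *ᵥ |z| = μ • |z| := by
  refine mulVec_eq_smul_of_dotProduct_mulVec_eq hsym hμ (le_antisymm ?_ (hμ |z|))
  calc |z| ⬝ᵥ A *ᵥ |z| ≤ z ⬝ᵥ A *ᵥ z := abs_dotProduct_mulVec_abs_le hA z
    _ = μ * (|z| ⬝ᵥ |z|) := by rw [hz, dotProduct_smul, smul_eq_mul, abs_dotProduct_abs]

lemma abs_pos_of_mulVec_eq_smul (hsym : A.IsSymm) (hA : ∀ i j, i ≠ j → A i j ≤ 0)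
    (hirr : ∀ i j, Relation.ReflTransGen (fun a b => A a b ≠ 0) i j) {μ : ℝ}
    (hμ : ∀ z, μ * (z ⬝ᵥ z) ≤ z ⬝ᵥ A *ᵥ z) {z : ι → ℝ} (hz : A *ᵥ z = μ • z) (hz0 : z ≠ 0)
    (i : ι) : 0 < |z| i := by
  refine (abs_nonneg (z i)).lt_of_ne fun hi => hz0 ?_
  have habs : |z| = 0 := eq_zero_of_mulVec_eq_smul_of_nonneg hA hirr
    (mulVec_abs_eq_smul_abs hsym hA hμ hz) (abs_nonneg z) (i := i) hi.symm
  funext j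
  simpa using congrFun habs j

lemma exists_eq_smul_of_mulVec_eq_smul (hsym : A.IsSymm) (hA : ∀ i j, i ≠ j → A i j ≤ 0)
    (hirr : ∀ i j, Relation.ReflTransGen (fun a b => A a b ≠ 0) i j) {μ : ℝ}
    (hμ : ∀ z, μ * (z ⬝ᵥ z) ≤ z ⬝ᵥ A *ᵥ z) {v w : ι → ℝ} (hv : A *ᵥ v = μ • v)
    (hvpos : ∀ i, 0 < v i) (hw : A *ᵥ w = μ • w) (i : ι) : ∃ c : ℝ, w = c • v := by
  refine ⟨w i / v i, sub_eq_zero.mp ?_⟩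
  by_contra hz0
  have hz : A *ᵥ (w - (w i / v i) • v) = μ • (w - (w i / v i) • v) := by
    rw [mulVec_sub, mulVec_smul, hw, hv, smul_sub, smul_comm]
  have := abs_pos_of_mulVec_eq_smul hsym hA hirr hμ hz hz0 i
  simp [div_mul_cancel₀ _ (hvpos i).ne'] at this

theorem exists_simple_least_eigenvalue_pos_eigenvector [Nonempty ι] (hsym : A.IsSymm)
    (hA : ∀ i j, i ≠ j → A i j ≤ 0)
    (hirr : ∀ i j, Relation.ReflTransGen (fun a b => A a b ≠ 0) i j) :
    ∃ (μ : ℝ) (v : ι → ℝ), A *ᵥ v = μ • v ∧ (∀ i, 0 < v i) ∧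
      (∀ (μ' : ℝ) (w : ι → ℝ), w ≠ 0 → A *ᵥ w = μ' • w → μ ≤ μ') ∧
      (∀ w : ι → ℝ, A *ᵥ w = μ • w → ∃ c : ℝ, w = c • v) := by
  obtain ⟨μ, x, hx0, hx, hμ⟩ := exists_min_rayleigh A
  have hxeig := mulVec_eq_smul_of_dotProduct_mulVec_eq hsym hμ hx
  have hvpos := abs_pos_of_mulVec_eq_smul hsym hA hirr hμ hxeig hx0
  refine ⟨μ, |x|, mulVec_abs_eq_smul_abs hsym hA hμ hxeig, hvpos, ?_, fun w hw => ?_⟩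
  · intro μ' w hw0 hw
    have h := hμ w
    rw [hw, dotProduct_smul, smul_eq_mul] at h
    exact le_of_mul_le_mul_right h (dotProduct_self_pos hw0)
  · exact exists_eq_smul_of_mulVec_eq_smul hsym hA hirr hμ
      (mulVec_abs_eq_smul_abs hsym hA hμ hxeig) hvpos hw (Classical.arbitrary ι)

end

section
variable {n : ℕ} {W : Matrix (Fin n) (Fin n) ℝ}

lemma isSymm_lapW_add_diagonal (hsym : W.IsSymm) (d : Fin n → ℝ) :
    (lapW W + diagonal d).IsSymm :=
  ((isSymm_diagonal _).sub hsym).add (isSymm_diagonal d)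

lemma lapW_add_diagonal_apply_of_ne (d : Fin n → ℝ) {i j : Fin n} (hij : i ≠ j) :
    (lapW W + diagonal d) i j = -W i j := by
  simp [lapW, hij]

lemma reflTransGen_lapW_add_diagonal_ne_zero (hconn : connectedW W) (d : Fin n → ℝ)
    (i j : Fin n) : Relation.ReflTransGen (fun a b => (lapW W + diagonal d) a b ≠ 0) i j := by
  refine Relation.reflTransGen_closed (fun a b hab => ?_) i j (hconn i j)
  rcases eq_or_ne a b with rfl | hne
  · exact .refl
  · exact .single (by rwa [lapW_add_diagonal_apply_of_ne d hne, neg_ne_zero])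

end

theorem smallest_eigenvalue_simple_positive_eigenvector_general
    {n : ℕ} (hn : 0 < n) (W : Matrix (Fin n) (Fin n) ℝ)
    (hsym : W.IsSymm) (hnonneg : ∀ i j, 0 ≤ W i j)
    (hconn : connectedW W)
    (d : Fin n → ℝ) :
    ∃ (μ : ℝ) (v : Fin n → ℝ),
      -- v is an eigenvector of L + D for the eigenvalue μ
      (lapW W + Matrix.diagonal d).mulVec v = μ • v ∧
      -- v is entrywise strictly positive
      (∀ i, 0 < v i) ∧
      -- μ is the smallest eigenvalue
      (∀ (μ' : ℝ) (w : Fin n → ℝ), w ≠ 0 →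
        (lapW W + Matrix.diagonal d).mulVec w = μ' • w → μ ≤ μ') ∧
      -- μ is a simple eigenvalue: its eigenspace is one-dimensional
      (∀ w : Fin n → ℝ,
        (lapW W + Matrix.diagonal d).mulVec w = μ • w → ∃ c : ℝ, w = c • v) := by
  have : Nonempty (Fin n) := ⟨⟨0, hn⟩⟩
  refine exists_simple_least_eigenvalue_pos_eigenvector (isSymm_lapW_add_diagonal hsym d)
    (fun i j hij => ?_) (reflTransGen_lapW_add_diagonal_ne_zero hconn d)
  rw [lapW_add_diagonal_apply_of_ne d hij, neg_nonpos]
  exact hnonneg i j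

/-- for a connected weighted graph and a 0/1 diagonal perturbation
with at least one 1, the smallest eigenvalue of `L + D` is simple and possesses
an entrywise strictly positive eigenvector. -/
theorem smallest_eigenvalue_simple_positive_eigenvector
    {n : ℕ} (hn : 0 < n) (W : Matrix (Fin n) (Fin n) ℝ)
    (hsym : W.IsSymm) (hnonneg : ∀ i j, 0 ≤ W i j)
    (hconn : connectedW W)
    (d : Fin n → ℝ) (hd : ∀ i, d i = 0 ∨ d i = 1) (hdpos : ∃ i, d i = 1) :
    ∃ (μ : ℝ) (v : Fin n → ℝ),
      -- v is an eigenvector of L + D for the eigenvalue μ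
      (lapW W + Matrix.diagonal d).mulVec v = μ • v ∧
      -- v is entrywise strictly positive
      (∀ i, 0 < v i) ∧
      -- μ is the smallest eigenvalue
      (∀ (μ' : ℝ) (w : Fin n → ℝ), w ≠ 0 →
        (lapW W + Matrix.diagonal d).mulVec w = μ' • w → μ ≤ μ') ∧
      -- μ is a simple eigenvalue: its eigenspace is one-dimensional
      (∀ w : Fin n → ℝ,
        (lapW W + Matrix.diagonal d).mulVec w = μ • w → ∃ c : ℝ, w = c • v) :=
  smallest_eigenvalue_simple_positive_eigenvector_general hn W hsym hnonneg hconn d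
end

section
/- Let G be a connected undirected graph with nonnegative edge weights, L its Laplacian, B a binary input matrix with at least one leader, and v the positive eigenvector of L_B = L + diag(B·1) associated with its smallest eigenvalue λ₁ > 0. Then there is no nonempty set S ⊆ V of non-leader vertices such that every vertex i in S satisfies v_i ≤ v_j for all neighbors j of i (i.e., such that no vertex of S has a strictly smaller-valued neighbor); equivalently, in the directed graph obtained by keeping edge (j→i) exactly when v_i/v_j > 1, every vertex is reachable from some leader. -/
open Matrix

/-- reachability of the FSN network of a SAN.  If `v` is the
positive eigenvector of the perturbed Laplacian for its smallest eigenvalue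
`λ₁ > 0` and `S` is a nonempty set of non-leader vertices none of which has a
neighbor with strictly smaller `v`-value, then we get a contradiction;
equivalently, in the FSN digraph (keep `j → i` iff `v i / v j > 1`) every
vertex is reachable from some leader. -/
theorem fsn_reachable_from_leader
    {n : ℕ} (W : Matrix (Fin n) (Fin n) ℝ)
    (hsym : W.IsSymm) (hnonneg : ∀ i j, 0 ≤ W i j)
    (hconn : connectedW W)
    (d : Fin n → ℝ) (hd : ∀ i, d i = 0 ∨ d i = 1) (hdpos : ∃ i, d i = 1)
    (lam1 : ℝ) (hlam1 : 0 < lam1)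
    (v : Fin n → ℝ) (hvpos : ∀ i, 0 < v i)
    (hev : (lapW W + Matrix.diagonal d).mulVec v = lam1 • v)
    (hmin : ∀ (μ' : ℝ) (w : Fin n → ℝ), w ≠ 0 →
      (lapW W + Matrix.diagonal d).mulVec w = μ' • w → lam1 ≤ μ') :
    -- the contradiction part:
    (∀ S : Finset (Fin n), S.Nonempty → (∀ i ∈ S, d i = 0) →
      (∀ i ∈ S, ∀ j, W i j ≠ 0 → v i ≤ v j) → False) ∧
    -- equivalently: every vertex is reachable from a leader in the FSN digraph
    (∀ i : Fin n, ∃ l : Fin n, d l = 1 ∧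
      Relation.ReflTransGen (fun a b => W b a ≠ 0 ∧ v b / v a > 1) l i) := by
  -- the eigen-equation, rewritten pointwise
  have key : ∀ i, (∑ j, W i j * (v i - v j)) + d i * v i = lam1 * v i := by
    intro i
    have h := congrFun hev i
    have h1 : ((lapW W + Matrix.diagonal d).mulVec v) i
        = (∑ j, W i j * (v i - v j)) + d i * v i := by
      simp only [lapW, Matrix.mulVec, dotProduct, Matrix.add_apply, Matrix.sub_apply,
        Matrix.diagonal_apply, sub_mul, add_mul, ite_mul, zero_mul,
        Finset.sum_add_distrib, Finset.sum_sub_distrib, Finset.sum_ite_eq,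
        Finset.mem_univ, if_true]
      have hs : ∑ j, W i j * (v i - v j) = (∑ j, W i j * v i) - ∑ j, W i j * v j := by
        rw [← Finset.sum_sub_distrib]
        exact Finset.sum_congr rfl fun j _ => by ring
      rw [hs, Finset.sum_mul]
    rw [h1] at h
    simpa using h
  have part1 : ∀ S : Finset (Fin n), S.Nonempty → (∀ i ∈ S, d i = 0) →
      (∀ i ∈ S, ∀ j, W i j ≠ 0 → v i ≤ v j) → False := by
    intro S hS hS0 hSmin
    obtain ⟨i, hi⟩ := hS
    have h1 := key i
    have hsum : (∑ j, W i j * (v i - v j)) ≤ 0 := by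
      apply Finset.sum_nonpos
      intro j _
      by_cases h : W i j = 0
      · simp [h]
      · exact mul_nonpos_of_nonneg_of_nonpos (hnonneg i j)
          (sub_nonpos.mpr (hSmin i hi j h))
    have : lam1 * v i ≤ 0 := by
      rw [← h1, hS0 i hi]; simpa using hsum
    nlinarith [hvpos i, hlam1]
  refine ⟨part1, ?_⟩
  -- every non-leader has a strictly smaller neighbor
  have step : ∀ i, d i = 0 → ∃ j, W i j ≠ 0 ∧ v j < v i := by
    intro i hi
    by_contra h
    push_neg at h
    refine part1 {i} ⟨i, Finset.mem_singleton_self i⟩ ?_ ?_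
    · intro a ha; rw [Finset.mem_singleton] at ha; rwa [ha]
    · intro a ha j hj
      rw [Finset.mem_singleton] at ha; subst ha
      exact h j hj
  have main : ∀ k : ℕ, ∀ i : Fin n,
      (Finset.univ.filter (fun j => v j < v i)).card ≤ k →
      ∃ l : Fin n, d l = 1 ∧
        Relation.ReflTransGen (fun a b => W b a ≠ 0 ∧ v b / v a > 1) l i := by
    intro k
    induction k with
    | zero =>
      intro i hcard
      rcases hd i with h0 | h1
      · obtain ⟨j, hj, hjv⟩ := step i h0
        exfalso
        have : j ∈ Finset.univ.filter (fun j => v j < v i) := by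
          simp [hjv]
        have := Finset.card_pos.mpr ⟨j, this⟩
        omega
      · exact ⟨i, h1, Relation.ReflTransGen.refl⟩
    | succ k ih =>
      intro i hcard
      rcases hd i with h0 | h1
      · obtain ⟨j, hj, hjv⟩ := step i h0
        have hss : (Finset.univ.filter (fun a => v a < v j))
            ⊂ (Finset.univ.filter (fun a => v a < v i)) := by
          constructor
          · intro a ha
            simp only [Finset.mem_filter, Finset.mem_univ, true_and] at *
            exact ha.trans hjv
          · intro hsub
            have : j ∈ Finset.univ.filter (fun a => v a < v i) := by simp [hjv]
            have hmem := this
            have : j ∉ Finset.univ.filter (fun a => v a < v j) := by simp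
            exact this (by
              by_contra h'
              exact h' (by
                -- j ∈ RHS but j ∉ LHS shows not subset; contradiction with hsub
                exact absurd (hsub hmem) (by simp)))
          -- messy; fix below
        have hlt := Finset.card_lt_card hss
        have hle : (Finset.univ.filter (fun a => v a < v j)).card ≤ k := by omega
        obtain ⟨l, hl, hp⟩ := ih j hle
        exact ⟨l, hl, hp.tail ⟨hj, (one_lt_div (hvpos j)).mpr hjv⟩⟩
      · exact ⟨i, h1, Relation.ReflTransGen.refl⟩
  intro i
  exact main _ i le_rfl
end

section
/- Let G be a connected undirected graph on n vertices, L its Laplacian, and D = diag(B·1_m) a binary diagonal matrix with at least one entry equal to 1. Then the smallest eigenvalue of L_B = L + D satisfies λ₁(L_B) ≤ 1, with equality if and only if D = I (all agents are leaders). -/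
open Matrix

/-!
The Laplacian `L` annihilates the all-ones vector `1`, so the Rayleigh quotient of `L + D` at `1`
gives `λ₁ · n ≤ 1ᵀ (L + D) 1 = ∑ dᵢ ≤ n`, with equality only if every `dᵢ = 1`. Conversely, for
`D = I` the quadratic form of `L + I` dominates `‖x‖²` because `L` is positive semidefinite, so
every eigenvalue is at least `1`.
-/

namespace Matrix

variable {ι : Type*} [Fintype ι]

theorem le_of_mulVec_eq_smul_of_forall_le_dotProduct {A : Matrix ι ι ℝ} {c μ : ℝ} {v : ι → ℝ}
    (hA : ∀ x, c * (x ⬝ᵥ x) ≤ x ⬝ᵥ A *ᵥ x) (hv : v ≠ 0) (hAv : A *ᵥ v = μ • v) : c ≤ μ := by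
  have hvv : 0 < v ⬝ᵥ v := by simpa using dotProduct_self_star_pos_iff.mpr hv
  have := hA v
  rw [hAv, dotProduct_smul, smul_eq_mul] at this
  exact le_of_mul_le_mul_right this hvv

theorem IsHermitian.mul_dotProduct_le_of_forall_le_eigenvalue [DecidableEq ι] {A : Matrix ι ι ℝ}
    (hA : A.IsHermitian) {c : ℝ} (h : ∀ μ v, v ≠ 0 → A *ᵥ v = μ • v → c ≤ μ) (x : ι → ℝ) :
    c * (x ⬝ᵥ x) ≤ x ⬝ᵥ A *ᵥ x := by
  have hB : (A - c • 1).IsHermitian := hA.sub (isHermitian_one.smul (IsSelfAdjoint.all c))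
  have hBpsd : (A - c • 1).PosSemidef := by
    refine hB.posSemidef_iff_eigenvalues_nonneg.mpr fun i => ?_
    let u := (hB.eigenvectorBasis i).ofLp
    have hu : u ≠ 0 := by
      simpa [u] using (hB.eigenvectorBasis.orthonormal.ne_zero i)
    have hAu : A *ᵥ u = (hB.eigenvalues i + c) • u := by
      have := hB.mulVec_eigenvectorBasis i
      rw [sub_mulVec, smul_mulVec, one_mulVec, sub_eq_iff_eq_add] at this
      rw [this, add_smul]
    simpa using h _ u hu hAu
  have := hBpsd.dotProduct_mulVec_nonneg x
  simp only [sub_mulVec, smul_mulVec, one_mulVec, dotProduct_sub, dotProduct_smul, star_trivial,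
    smul_eq_mul] at this
  linarith

end Matrix

section Laplacian

variable {n : ℕ} {W : Matrix (Fin n) (Fin n) ℝ}

theorem lapW_mulVec_one (W : Matrix (Fin n) (Fin n) ℝ) : lapW W *ᵥ 1 = 0 := by
  ext i
  rw [lapW, sub_mulVec, Pi.sub_apply, mulVec_diagonal]
  simp [mulVec, dotProduct]

theorem isHermitian_lapW (hW : W.IsSymm) : (lapW W).IsHermitian := by
  change (lapW W)ᵀ = lapW W
  rw [lapW, transpose_sub, diagonal_transpose, hW.eq]

theorem dotProduct_lapW_mulVec (hW : W.IsSymm) (x : Fin n → ℝ) :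
    x ⬝ᵥ lapW W *ᵥ x = (∑ i, ∑ j, W i j * (x i - x j) ^ 2) / 2 := by
  have hswap : ∑ i, ∑ j, W i j * x j ^ 2 = ∑ i, ∑ j, W i j * x i ^ 2 := by
    rw [Finset.sum_comm]
    simp_rw [hW.apply]
  have hexpand : ∑ i, ∑ j, W i j * (x i - x j) ^ 2 =
      ∑ i, ∑ j, W i j * x i ^ 2 - 2 * ∑ i, ∑ j, W i j * (x i * x j) +
        ∑ i, ∑ j, W i j * x j ^ 2 := by
    simp only [Finset.mul_sum, ← Finset.sum_sub_distrib, ← Finset.sum_add_distrib]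
    exact Finset.sum_congr rfl fun i _ => Finset.sum_congr rfl fun j _ => by ring
  have hform : x ⬝ᵥ lapW W *ᵥ x =
      ∑ i, ∑ j, W i j * x i ^ 2 - ∑ i, ∑ j, W i j * (x i * x j) := by
    rw [lapW, sub_mulVec, dotProduct_sub]
    congr 1
    · simp only [dotProduct, mulVec_diagonal, Finset.mul_sum, Finset.sum_mul]
      exact Finset.sum_congr rfl fun i _ => Finset.sum_congr rfl fun j _ => by ring
    · simp only [dotProduct, mulVec, Finset.mul_sum]
      exact Finset.sum_congr rfl fun i _ => Finset.sum_congr rfl fun j _ => by ring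
  rw [hform, hexpand, hswap]
  ring

theorem dotProduct_lapW_mulVec_nonneg (hW : W.IsSymm) (hW₀ : ∀ i j, 0 ≤ W i j)
    (x : Fin n → ℝ) : 0 ≤ x ⬝ᵥ lapW W *ᵥ x := by
  rw [dotProduct_lapW_mulVec hW]
  exact div_nonneg (Finset.sum_nonneg fun i _ => Finset.sum_nonneg fun j _ =>
    mul_nonneg (hW₀ i j) (sq_nonneg _)) zero_le_two

end Laplacian

theorem smallest_eigenvalue_perturbed_laplacian_le_one_general
    {n : ℕ} (W : Matrix (Fin n) (Fin n) ℝ)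
    (hsym : W.IsSymm) (hnonneg : ∀ i j, 0 ≤ W i j)
    (d : Fin n → ℝ) (hd : ∀ i, d i = 0 ∨ d i = 1)
    (lam1 : ℝ)
    (hlam1 : IsLeast {μ : ℝ | ∃ v : Fin n → ℝ, v ≠ 0 ∧
      (lapW W + Matrix.diagonal d).mulVec v = μ • v} lam1) :
    lam1 ≤ 1 ∧ (lam1 = 1 ↔ d = fun _ => 1) := by
  obtain ⟨⟨v, hv, hAv⟩, hleast⟩ := hlam1
  have hn : (0 : ℝ) < n := by
    obtain ⟨i, -⟩ := Function.ne_iff.mp hv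
    exact_mod_cast i.pos
  have hd_le : ∀ i ∈ Finset.univ, d i ≤ 1 := fun i _ => by rcases hd i with h | h <;> simp [h]
  have hA : (lapW W + diagonal d).IsHermitian :=
    (isHermitian_lapW hsym).add (isHermitian_diagonal d)
  have hA_one : (lapW W + diagonal d) *ᵥ 1 = d := by
    ext i
    simp [add_mulVec, lapW_mulVec_one, mulVec_diagonal]
  have hray : lam1 * n ≤ ∑ i, d i := by
    simpa [hA_one, one_dotProduct] using
      hA.mul_dotProduct_le_of_forall_le_eigenvalue (fun μ v hv hAv => hleast ⟨v, hv, hAv⟩) 1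
  have hsum : ∑ i, d i ≤ n := by simpa using Finset.sum_le_sum hd_le
  have hle : lam1 ≤ 1 := by nlinarith
  refine ⟨hle, fun h => ?_, fun h => ?_⟩
  · rw [h, one_mul] at hray
    have hsum_eq : ∑ i, d i = ∑ _i : Fin n, (1 : ℝ) := by simpa using le_antisymm hsum hray
    funext i
    exact (Finset.sum_eq_sum_iff_of_le hd_le).mp hsum_eq i (Finset.mem_univ i)
  · subst h
    refine le_antisymm hle (le_of_mulVec_eq_smul_of_forall_le_dotProduct (fun x => ?_) hv hAv)
    rw [diagonal_one, add_mulVec, one_mulVec, dotProduct_add, one_mul]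
    linarith [dotProduct_lapW_mulVec_nonneg hsym hnonneg x]

/-- the smallest eigenvalue of the perturbed Laplacian
`L_B = L + diagonal d` (with `d` a 0/1 vector, not identically zero) satisfies
`λ₁(L_B) ≤ 1`, with equality if and only if `d = 1` (all agents leaders). -/
theorem smallest_eigenvalue_perturbed_laplacian_le_one
    {n : ℕ} (hn : 0 < n) (W : Matrix (Fin n) (Fin n) ℝ)
    (hsym : W.IsSymm) (hnonneg : ∀ i j, 0 ≤ W i j)
    (hconn : connectedW W)
    (d : Fin n → ℝ) (hd : ∀ i, d i = 0 ∨ d i = 1) (hdpos : ∃ i, d i = 1)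
    (lam1 : ℝ)
    (hlam1 : IsLeast {μ : ℝ | ∃ v : Fin n → ℝ, v ≠ 0 ∧
      (lapW W + Matrix.diagonal d).mulVec v = μ • v} lam1) :
    lam1 ≤ 1 ∧ (lam1 = 1 ↔ d = fun _ => 1) :=
  smallest_eigenvalue_perturbed_laplacian_le_one_general W hsym hnonneg d hd lam1 hlam1
end

section
/- Let G be a connected undirected graph with Laplacian L and B a binary input matrix with at least one leader but not all vertices leaders. Let Ḡ be the FSN network of G (a directed acyclic subgraph in which every vertex has in-degree at least one, counting leader inputs). Then λ₁(L_B(Ḡ)) > λ₁(L_B(G)); if all vertices are leaders, then λ₁(L_B(Ḡ)) = λ₁(L_B(G)) = 1. -/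
open Matrix

/-- The FSN adjacency matrix: keep the edge `j → i` (i.e. the weight `w_{ij}`
in agent `i`'s update) exactly when `v i / v j > 1`. -/
noncomputable def fsnW {n : ℕ} (W : Matrix (Fin n) (Fin n) ℝ) (v : Fin n → ℝ) :
    Matrix (Fin n) (Fin n) ℝ :=
  Matrix.of fun i j => if v i / v j > 1 then W i j else 0

lemma rowForm {n : ℕ} (W : Matrix (Fin n) (Fin n) ℝ) (d x : Fin n → ℝ) (i : Fin n) :
    ((lapW W + Matrix.diagonal d).mulVec x) i = (∑ j, W i j * (x i - x j)) + d i * x i := by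
  have : ((lapW W + Matrix.diagonal d).mulVec x) i
      = (∑ j, W i j) * x i - (∑ j, W i j * x j) + d i * x i := by
    rw [Matrix.add_mulVec]
    simp only [lapW, Matrix.sub_mulVec, Pi.add_apply, Pi.sub_apply, Matrix.mulVec_diagonal]
    rfl
  rw [this, Finset.sum_mul, ← Finset.sum_sub_distrib]
  congr 1
  exact Finset.sum_congr rfl fun j _ => by ring

/-- The core contradiction: if `lamBar ≤ lam1` with `0 < lam1 < 1`, and `w` is a
real eigenvector of the FSN perturbed Laplacian with `w ≤ t • v` and equality
somewhere, we reach a contradiction with `d i ∈ {0,1}`. -/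
lemma fsn_key {n : ℕ} (W : Matrix (Fin n) (Fin n) ℝ) (hnonneg : ∀ i j, 0 ≤ W i j)
    (d v : Fin n → ℝ) (hvpos : ∀ i, 0 < v i) (hd : ∀ i, d i = 0 ∨ d i = 1)
    (lam1 lamBar : ℝ)
    (hvev : ∀ i, (∑ j, W i j * (v i - v j)) + d i * v i = lam1 * v i)
    (hlam_pos : 0 < lam1) (hlam_lt1 : lam1 < 1) (hcon : lamBar ≤ lam1)
    (w : Fin n → ℝ) (t : ℝ) (ht : 0 < t) (hle : ∀ j, w j ≤ t * v j)
    (hweq : ∀ i, (∑ j, (fsnW W v) i j * (w i - w j)) + d i * w i = lamBar * w i)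
    (i₁ : Fin n) (heq : w i₁ = t * v i₁) : False := by
  classical
  set S : Finset (Fin n) := Finset.univ.filter (fun k => w k = t * v k) with hS
  have hSne : S.Nonempty := ⟨i₁, by simp [hS, heq]⟩
  obtain ⟨i, hiS, hmin⟩ := Finset.exists_min_image S v hSne
  have hiw : w i = t * v i := by simpa [hS] using hiS
  have hmin' : ∀ j, w j = t * v j → v i ≤ v j := fun j hj =>
    hmin j (by simp [hS, hj])
  -- the termwise-nonnegative defect
  set f : Fin n → ℝ :=
    fun j => (fsnW W v) i j * (w i - w j) - t * (W i j * (v i - v j)) with hf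
  have hkept : ∀ j, v j < v i → (fsnW W v) i j = W i j := fun j hj => by
    simp [fsnW, if_pos ((one_lt_div (hvpos j)).mpr hj)]
  have hrem : ∀ j, ¬ v j < v i → (fsnW W v) i j = 0 := fun j hj => by
    simp only [fsnW, Matrix.of_apply, gt_iff_lt]
    rw [if_neg]
    rw [one_lt_div (hvpos j)]
    exact hj
  have hf_nonneg : ∀ j, 0 ≤ f j := by
    intro j
    by_cases hk : v j < v i
    · have h1 := hkept j hk
      have h2 := hle j
      have h3 := hnonneg i j
      simp only [hf, h1]
      nlinarith [mul_nonneg h3 (sub_nonneg.mpr h2)]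
    · have h1 := hrem j hk
      have h2 : v i ≤ v j := le_of_not_gt hk
      have h3 := hnonneg i j
      simp only [hf, h1]
      nlinarith [mul_nonneg h3 (sub_nonneg.mpr h2), ht.le]
  have hEeq : ∑ j, f j = (lamBar - lam1) * (t * v i) := by
    have hA : ∑ j, (fsnW W v) i j * (w i - w j) = lamBar * w i - d i * w i := by
      linarith [hweq i]
    have hB : ∑ j, W i j * (v i - v j) = lam1 * v i - d i * v i := by
      linarith [hvev i]
    simp only [hf]
    rw [Finset.sum_sub_distrib, ← Finset.mul_sum, hA, hB, hiw]
    ring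
  have hEle : ∑ j, f j ≤ 0 := by
    rw [hEeq]
    nlinarith [mul_pos ht (hvpos i)]
  have hE0 : ∑ j, f j = 0 :=
    le_antisymm hEle (Finset.sum_nonneg fun j _ => hf_nonneg j)
  have hterm : ∀ j, f j = 0 := by
    intro j
    exact (Finset.sum_eq_zero_iff_of_nonneg (fun j _ => hf_nonneg j)).mp hE0 j
      (Finset.mem_univ j)
  -- all neighbors of i are at the same level
  have hnbr : ∀ j, W i j ≠ 0 → v j = v i := by
    intro j hWj
    by_cases hk : v j < v i
    · exfalso
      have fj0 := hterm j
      rw [hf] at fj0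
      simp only [hkept j hk] at fj0
      have hzero : W i j * (t * v j - w j) = 0 := by
        linear_combination fj0 - W i j * hiw
      rcases mul_eq_zero.mp hzero with h | h
      · exact hWj h
      · have : w j = t * v j := by linarith
        exact absurd (hmin' j this) (not_le.mpr hk)
    · have fj0 := hterm j
      rw [hf] at fj0
      simp only [hrem j hk, zero_mul, zero_sub, neg_eq_zero] at fj0
      rcases mul_eq_zero.mp fj0 with h | h
      · exact absurd h (ne_of_gt ht)
      · rcases mul_eq_zero.mp h with h' | h'
        · exact absurd h' hWj
        · linarith [sub_eq_zero.mp h']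
  have hsum0 : ∑ j, W i j * (v i - v j) = 0 := by
    apply Finset.sum_eq_zero
    intro j _
    by_cases hW : W i j = 0
    · simp [hW]
    · rw [hnbr j hW]; ring
  have hdi : d i = lam1 := by
    have h := hvev i
    rw [hsum0, zero_add] at h
    exact mul_right_cancel₀ (ne_of_gt (hvpos i)) h
  rcases hd i with h | h <;> rw [h] at hdi <;> linarith

/-- the smallest (real) eigenvalue of the perturbed Laplacian of
the FSN network strictly exceeds that of the original network when not all
vertices are leaders; when all vertices are leaders both equal `1`. -/
theorem fsn_convergence_rate_enhancement
    {n : ℕ} (hn : 0 < n) (W : Matrix (Fin n) (Fin n) ℝ)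
    (hsym : W.IsSymm) (hnonneg : ∀ i j, 0 ≤ W i j)
    (hconn : connectedW W)
    (d : Fin n → ℝ) (hd : ∀ i, d i = 0 ∨ d i = 1) (hdpos : ∃ i, d i = 1)
    (lam1 : ℝ)
    (hlam1 : IsLeast {μ : ℝ | ∃ w : Fin n → ℝ, w ≠ 0 ∧
      (lapW W + Matrix.diagonal d).mulVec w = μ • w} lam1)
    (v : Fin n → ℝ) (hvpos : ∀ i, 0 < v i)
    (hev : (lapW W + Matrix.diagonal d).mulVec v = lam1 • v)
    (lamBar : ℝ)
    (hlamBar : IsLeast {μ : ℝ | ∃ w : Fin n → ℝ, w ≠ 0 ∧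
      (lapW (fsnW W v) + Matrix.diagonal d).mulVec w = μ • w} lamBar) :
    ((d ≠ fun _ => 1) → lam1 < lamBar) ∧
    ((d = fun _ => 1) → lamBar = lam1 ∧ lam1 = 1) := by
  classical
  -- rowwise eigen-equation for v
  have hvev : ∀ i, (∑ j, W i j * (v i - v j)) + d i * v i = lam1 * v i := by
    intro i
    have h := congrFun hev i
    rw [rowForm] at h
    simpa using h
  -- sum of v is positive
  have hsumv : 0 < ∑ i, v i :=
    Finset.sum_pos (fun i _ => hvpos i) ⟨⟨0, hn⟩, Finset.mem_univ _⟩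
  -- the double sum of W i j * (v i - v j) vanishes by symmetry
  have hdouble : ∑ i, ∑ j, W i j * (v i - v j) = 0 := by
    have h1 : ∑ i, ∑ j, W i j * (v i - v j) = ∑ i, ∑ j, W i j * (v j - v i) := by
      rw [Finset.sum_comm]
      exact Finset.sum_congr rfl fun i _ => Finset.sum_congr rfl fun j _ => by
        rw [hsym.apply i j]
    have h2 : ∑ i, ∑ j, W i j * (v j - v i)
        = -∑ i, ∑ j, W i j * (v i - v j) := by
      rw [← Finset.sum_neg_distrib]
      exact Finset.sum_congr rfl fun i _ => by
        rw [← Finset.sum_neg_distrib]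
        exact Finset.sum_congr rfl fun j _ => by ring
    linarith
  -- lam1 * ∑ v = ∑ d v
  have hlamsum : lam1 * (∑ i, v i) = ∑ i, d i * v i := by
    have h : ∑ i, ((∑ j, W i j * (v i - v j)) + d i * v i) = ∑ i, lam1 * v i :=
      Finset.sum_congr rfl fun i _ => hvev i
    rw [Finset.sum_add_distrib, hdouble, zero_add] at h
    rw [← Finset.mul_sum] at h
    linarith
  obtain ⟨i0, hi0⟩ := hdpos
  have hdv_nonneg : ∀ i, 0 ≤ d i * v i := fun i => by
    rcases hd i with h | h <;> rw [h] <;> [simp; linarith [hvpos i]]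
  have hsum_dv_pos : 0 < ∑ i, d i * v i := by
    have h1 : d i0 * v i0 ≤ ∑ i, d i * v i :=
      Finset.single_le_sum (fun i _ => hdv_nonneg i) (Finset.mem_univ i0)
    rw [hi0, one_mul] at h1
    linarith [hvpos i0]
  have hlam_pos : 0 < lam1 := by
    nlinarith
  constructor
  · -- main case: not all leaders
    intro hne
    have h1 : ¬ ∀ i, d i = 1 := fun h => hne (funext h)
    push_neg at h1
    obtain ⟨i1, hi1⟩ := h1
    have hdi1 : d i1 = 0 := (hd i1).resolve_right hi1
    have hlam_lt1 : lam1 < 1 := by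
      have hlt : ∑ i, d i * v i < ∑ i, v i := by
        apply Finset.sum_lt_sum (fun i _ => by
          rcases hd i with h | h <;> rw [h] <;> [simp [(hvpos i).le]; simp])
        exact ⟨i1, Finset.mem_univ i1, by rw [hdi1]; simpa using hvpos i1⟩
      nlinarith
    by_contra hc
    push_neg at hc  -- lamBar ≤ lam1
    obtain ⟨w, hw0, hweqM⟩ := hlamBar.1
    have hweq : ∀ i, (∑ j, (fsnW W v) i j * (w i - w j)) + d i * w i = lamBar * w i := by
      intro i
      have h := congrFun hweqM i
      rw [rowForm] at h
      simpa using h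
    obtain ⟨i₁, -, hi₁⟩ := Finset.exists_max_image Finset.univ
      (fun k => |w k| / v k) ⟨⟨0, hn⟩, Finset.mem_univ _⟩
    set t : ℝ := |w i₁| / v i₁ with htdef
    have ht : 0 < t := by
      obtain ⟨k, hk⟩ := Function.ne_iff.mp hw0
      have h1 : 0 < |w k| / v k := div_pos (abs_pos.mpr hk) (hvpos k)
      exact lt_of_lt_of_le h1 (hi₁ k (Finset.mem_univ k))
    have hle_abs : ∀ j, |w j| ≤ t * v j := by
      intro j
      have := hi₁ j (Finset.mem_univ j)
      rw [div_le_iff₀ (hvpos j)] at this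
      linarith [this]
    have htv : t * v i₁ = |w i₁| := by
      rw [htdef, div_mul_cancel₀ _ (ne_of_gt (hvpos i₁))]
    rcases le_or_gt 0 (w i₁) with hsgn | hsgn
    · exact fsn_key W hnonneg d v hvpos hd lam1 lamBar hvev
        hlam_pos hlam_lt1 hc w t ht
        (fun j => le_trans (le_abs_self _) (hle_abs j))
        hweq i₁ (by rw [abs_of_nonneg hsgn] at htv; linarith)
    · -- use -w
      have hweq' : ∀ i, (∑ j, (fsnW W v) i j * ((-w) i - (-w) j))
          + d i * (-w) i = lamBar * (-w) i := by
        intro i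
        have h := hweq i
        have hs : ∑ j, (fsnW W v) i j * ((-w) i - (-w) j)
            = -∑ j, (fsnW W v) i j * (w i - w j) := by
          rw [← Finset.sum_neg_distrib]
          exact Finset.sum_congr rfl fun j _ => by
            simp only [Pi.neg_apply]; ring
        rw [hs]
        simp only [Pi.neg_apply]
        linarith
      exact fsn_key W hnonneg d v hvpos hd lam1 lamBar hvev
        hlam_pos hlam_lt1 hc (-w) t ht
        (fun j => le_trans (neg_le_abs _) (hle_abs j))
        hweq' i₁ (by simp only [Pi.neg_apply]; rw [abs_of_neg hsgn] at htv; linarith)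
  · -- all leaders
    intro hone
    have hd1 : ∀ i, d i = 1 := fun i => congrFun hone i
    have hlam1_eq : lam1 = 1 := by
      have h : ∑ i, d i * v i = ∑ i, v i :=
        Finset.sum_congr rfl fun i _ => by rw [hd1 i, one_mul]
      rw [h] at hlamsum
      have := mul_right_cancel₀ (ne_of_gt hsumv) (hlamsum.trans (one_mul _).symm)
      exact this
    have hLv : ∀ i, ∑ j, W i j * (v i - v j) = 0 := by
      intro i
      have h := hvev i
      rw [hd1 i, hlam1_eq] at h
      linarith
    -- quadratic form vanishes
    have hquad : ∑ i, ∑ j, W i j * (v i - v j) ^ 2 = 0 := by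
      have hexp : ∀ i j, W i j * (v i - v j) ^ 2
          = W i j * (v i - v j) * v i - W i j * (v i - v j) * v j := fun i j => by ring
      have h1 : ∑ i, ∑ j, W i j * (v i - v j) * v i = 0 := by
        apply Finset.sum_eq_zero
        intro i _
        rw [← Finset.sum_mul, hLv i, zero_mul]
      have h2 : ∑ i, ∑ j, W i j * (v i - v j) * v j = 0 := by
        have hsw : ∑ i, ∑ j, W i j * (v i - v j) * v j
            = ∑ i, ∑ j, W i j * (v j - v i) * v i := by
          rw [Finset.sum_comm]
          exact Finset.sum_congr rfl fun i _ => Finset.sum_congr rfl fun j _ => by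
            rw [hsym.apply i j]
        rw [hsw]
        have key : ∀ i, ∑ j, W i j * (v j - v i) * v i
            = -((∑ j, W i j * (v i - v j)) * v i) := by
          intro i
          have hcg : ∑ j, W i j * (v j - v i) * v i
              = ∑ j, -(W i j * (v i - v j) * v i) :=
            Finset.sum_congr rfl fun j _ => by ring
          rw [hcg, Finset.sum_neg_distrib, Finset.sum_mul]
        rw [Finset.sum_congr rfl fun i _ => key i]
        apply Finset.sum_eq_zero
        intro i _
        rw [hLv i]; ring
      calc ∑ i, ∑ j, W i j * (v i - v j) ^ 2
          = (∑ i, ∑ j, W i j * (v i - v j) * v i)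
            - ∑ i, ∑ j, W i j * (v i - v j) * v j := by
            rw [← Finset.sum_sub_distrib]
            exact Finset.sum_congr rfl fun i _ => by
              rw [← Finset.sum_sub_distrib]
              exact Finset.sum_congr rfl fun j _ => hexp i j
        _ = 0 := by rw [h1, h2, sub_zero]
    have hedge : ∀ a b : Fin n, W a b ≠ 0 → v a = v b := by
      intro a b hab
      have houter := (Finset.sum_eq_zero_iff_of_nonneg (fun i _ =>
        Finset.sum_nonneg fun j _ =>
          mul_nonneg (hnonneg i j) (sq_nonneg _))).mp hquad a (Finset.mem_univ a)
      have hinner := (Finset.sum_eq_zero_iff_of_nonneg (fun j _ =>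
        mul_nonneg (hnonneg a j) (sq_nonneg _))).mp houter b (Finset.mem_univ b)
      rcases mul_eq_zero.mp hinner with h | h
      · exact absurd h hab
      · have := pow_eq_zero_iff (n := 2) (by norm_num) |>.mp h
        linarith [sub_eq_zero.mp this]
    have hconst : ∀ a b : Fin n, v a = v b := by
      intro a b
      induction hconn a b with
      | refl => rfl
      | tail _ hbc ih => exact ih.trans (hedge _ _ hbc)
    have hfsn0 : fsnW W v = 0 := by
      ext i j
      simp only [fsnW, Matrix.of_apply, Matrix.zero_apply, gt_iff_lt]
      rw [if_neg]
      rw [hconst i j, div_self (ne_of_gt (hvpos j))]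
      exact lt_irrefl 1
    have hlamBar_eq : lamBar = 1 := by
      obtain ⟨w, hw0, hweqM⟩ := hlamBar.1
      obtain ⟨k, hk⟩ := Function.ne_iff.mp hw0
      have h := congrFun hweqM k
      rw [rowForm, hfsn0] at h
      simp only [Matrix.zero_apply, zero_mul, Finset.sum_const_zero, zero_add,
        hd1 k, one_mul] at h
      have h' : w k = lamBar * w k := by simpa using h
      have hz : (lamBar - 1) * w k = 0 := by linear_combination -h'
      rcases mul_eq_zero.mp hz with h'' | h''
      · linarith
      · exact absurd h'' hk
    exact ⟨hlamBar_eq.trans hlam1_eq.symm, hlam1_eq⟩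
end

section
/- Consider the linear ODE ẋ(t) = M x(t) where M ∈ ℝ^{n×n} is symmetric. Let μ be the largest nonzero eigenvalue of M, with P_μ the orthogonal projection onto its eigenspace, and suppose P_μ x(0) ≠ 0. Let ψ₁, ψ₂ be selection (coordinate-projection) matrices such that ψ_q P_μ x(0) ≠ 0 for q = 1,2, and suppose all eigenvalues of M are ≤ 0 with μ < 0 the largest nonzero one (or more generally the terms with eigenvalue larger than μ vanish on x(0) derivatives appropriately). Then lim_{t→∞} ‖ψ₁ ẋ(t)‖ / ‖ψ₂ ẋ(t)‖ = ‖ψ₁ P_μ x(0)‖ / ‖ψ₂ P_μ x(0)‖. -/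
/-!
Expanding `x 0` in an orthonormal eigenbasis `bᵢ` of `M` (eigenvalues `νᵢ`) gives
`M x(t) = ∑ cᵢ νᵢ e^{νᵢ t} bᵢ`. After rescaling by `e^{-μ t}`, the modes with `νᵢ < μ` decay and
those with `νᵢ = 0` vanish, so `e^{-μ t} ẋ(t) → μ P x(0)`, because `P` is the orthogonal projection
onto the `μ`-eigenspace. Both norms in the ratio are homogeneous, so the scalar factor cancels and
the ratio converges to the ratio at the limit.
-/

open Matrix Filter

/-- Euclidean norm of a real vector indexed by a finite type. -/
noncomputable def euclNorm {ι : Type*} [Fintype ι] (v : ι → ℝ) : ℝ :=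
  Real.sqrt (∑ i, v i ^ 2)

/-- `ψ` is a selection matrix: its rows are (distinct) rows of the identity. -/
def IsSelectionMatrix {s n : ℕ} (ψ : Matrix (Fin s) (Fin n) ℝ) : Prop :=
  ∃ f : Fin s → Fin n, Function.Injective f ∧
    ψ = Matrix.of fun k i => if i = f k then (1 : ℝ) else 0

open Real Topology Finset

section LinearODE

variable {E : Type*} [NormedAddCommGroup E] [NormedSpace ℝ E] {ι : Type*} [Fintype ι]
  {A : E →L[ℝ] E} {b : ι → E} {ν : ι → ℝ}

theorem hasDerivAt_sum_exp_smul_eigenvector (hb : ∀ i, A (b i) = ν i • b i) (c : ι → ℝ)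
    (t : ℝ) :
    HasDerivAt (fun t => ∑ i, (c i * exp (ν i * t)) • b i)
      (A (∑ i, (c i * exp (ν i * t)) • b i)) t := by
  simp only [map_sum, map_smul, hb, smul_smul]
  refine HasDerivAt.fun_sum fun i _ => ?_
  convert (((hasDerivAt_id' t).const_mul (ν i)).exp.const_mul (c i)).smul_const (b i) using 2
  ring

theorem eq_sum_exp_smul_of_hasDerivAt (hb : ∀ i, A (b i) = ν i • b i) {c : ι → ℝ}
    {x : ℝ → E} (hx : ∀ t, HasDerivAt x (A (x t)) t) (hx0 : x 0 = ∑ i, c i • b i) :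
    x = fun t => ∑ i, (c i * exp (ν i * t)) • b i :=
  ODE_solution_unique_univ (v := fun _ => A) (s := fun _ => Set.univ) (t₀ := 0)
    (fun _ => A.lipschitz.lipschitzOnWith) (fun t => ⟨hx t, trivial⟩)
    (fun t => ⟨hasDerivAt_sum_exp_smul_eigenvector hb c t, trivial⟩) (by simp [hx0])

theorem tendsto_exp_smul_sum_exp_smul {μ : ℝ} {d : ι → ℝ} (hd : ∀ i, d i ≠ 0 → ν i ≤ μ)
    (b : ι → E) :
    Tendsto (fun t => exp (-μ * t) • ∑ i, (d i * exp (ν i * t)) • b i) atTop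
      (𝓝 (∑ i ∈ univ.filter (fun i => ν i = μ), d i • b i)) := by
  simp only [Finset.smul_sum, smul_smul, sum_filter]
  refine tendsto_finsetSum _ fun i _ => ?_
  have hexp : ∀ t, exp (-μ * t) * (d i * exp (ν i * t)) = d i * exp ((ν i - μ) * t) := by
    intro t; rw [mul_left_comm, ← exp_add]; ring_nf
  simp only [hexp]
  split_ifs with hνμ
  · simp [hνμ]
  · rcases eq_or_ne (d i) 0 with h0 | h0
    · simp [h0]
    have hlt : ν i - μ < 0 := sub_neg.2 (lt_of_le_of_ne (hd i h0) hνμ)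
    have hdecay : Tendsto (fun t => exp ((ν i - μ) * t)) atTop (𝓝 0) :=
      tendsto_exp_atBot.comp (tendsto_id.const_mul_atTop_of_neg hlt)
    simpa using (hdecay.const_mul (d i)).smul_const (b i)

theorem tendsto_exp_smul_of_hasDerivAt (hb : ∀ i, A (b i) = ν i • b i) {c : ι → ℝ}
    {x : ℝ → E} (hx : ∀ t, HasDerivAt x (A (x t)) t) (hx0 : x 0 = ∑ i, c i • b i) {μ : ℝ}
    (hdom : ∀ i, c i * ν i ≠ 0 → ν i ≤ μ) :
    Tendsto (fun t => exp (-μ * t) • A (x t)) atTop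
      (𝓝 (μ • ∑ i ∈ univ.filter (fun i => ν i = μ), c i • b i)) := by
  have hAx (t : ℝ) : A (x t) = ∑ i, (c i * ν i * exp (ν i * t)) • b i := by
    simp only [eq_sum_exp_smul_of_hasDerivAt hb hx hx0, map_sum, map_smul, hb, smul_smul,
      mul_right_comm]
  have hlimit : ∑ i ∈ univ.filter (fun i => ν i = μ), (c i * ν i) • b i =
      μ • ∑ i ∈ univ.filter (fun i => ν i = μ), c i • b i := by
    rw [smul_sum]
    refine sum_congr rfl fun i hi => ?_
    rw [(mem_filter.1 hi).2, smul_smul, mul_comm]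
  simpa only [hAx, hlimit] using tendsto_exp_smul_sum_exp_smul hdom b

end LinearODE

namespace Matrix

variable {m R : Type*} [Fintype m] [CommRing R] {M : Matrix m m R}

theorem IsSymm.dotProduct_mulVec_comm (hM : M.IsSymm) (v w : m → R) :
    v ⬝ᵥ M *ᵥ w = M *ᵥ v ⬝ᵥ w := by
  rw [dotProduct_mulVec, ← mulVec_transpose, hM.eq]

theorem IsSymm.dotProduct_eq_zero_of_eigenvalue_ne [NoZeroDivisors R] (hM : M.IsSymm)
    {v w : m → R} {ν μ : R} (hv : M *ᵥ v = ν • v) (hw : M *ᵥ w = μ • w) (hνμ : ν ≠ μ) :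
    v ⬝ᵥ w = 0 := by
  have h := hM.dotProduct_mulVec_comm v w
  rw [hv, hw, dotProduct_smul, smul_dotProduct, smul_eq_mul, smul_eq_mul, ← sub_eq_zero,
    ← sub_mul] at h
  exact (mul_eq_zero.1 h).resolve_left (sub_ne_zero.2 hνμ.symm)

theorem IsSymm.mulVec_eigenvector_eq_ite [LinearOrder R] [IsStrictOrderedRing R]
    (hM : M.IsSymm) {P : Matrix m m R} (hP : P.IsSymm) {μ : R} (hMP : M * P = μ • P)
    (hPfix : ∀ w, M *ᵥ w = μ • w → P *ᵥ w = w) {v : m → R} {ν : R} (hv : M *ᵥ v = ν • v) :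
    P *ᵥ v = if ν = μ then v else 0 := by
  split_ifs with hνμ
  · exact hPfix v (hνμ ▸ hv)
  have hMPv : M *ᵥ P *ᵥ v = μ • P *ᵥ v := by rw [mulVec_mulVec, hMP, smul_mulVec]
  refine dotProduct_self_eq_zero.1 ?_
  calc P *ᵥ v ⬝ᵥ P *ᵥ v = v ⬝ᵥ P *ᵥ P *ᵥ v := (hP.dotProduct_mulVec_comm _ _).symm
    _ = v ⬝ᵥ P *ᵥ v := by rw [hPfix _ hMPv]
    _ = 0 := hM.dotProduct_eq_zero_of_eigenvalue_ne hv hMPv hνμ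

end Matrix

theorem tendsto_norm_div_norm_of_tendsto_smul {𝕜 α E F₁ F₂ : Type*} [NormedField 𝕜]
    [NormedAddCommGroup E] [NormedSpace 𝕜 E] [NormedAddCommGroup F₁] [NormedSpace 𝕜 F₁]
    [NormedAddCommGroup F₂] [NormedSpace 𝕜 F₂] (T₁ : E →L[𝕜] F₁) (T₂ : E →L[𝕜] F₂)
    {l : Filter α} {a : α → 𝕜} {y : α → E} {Y : E} (ha : ∀ t, a t ≠ 0)
    (hy : Tendsto (fun t => a t • y t) l (𝓝 Y)) (hY : T₂ Y ≠ 0) :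
    Tendsto (fun t => ‖T₁ (y t)‖ / ‖T₂ (y t)‖) l (𝓝 (‖T₁ Y‖ / ‖T₂ Y‖)) := by
  have h₁ := ((T₁.continuous.tendsto Y).comp hy).norm
  have h₂ := ((T₂.continuous.tendsto Y).comp hy).norm
  refine (h₁.div h₂ (norm_ne_zero_iff.2 hY)).congr fun t => ?_
  simp only [Function.comp_apply, map_smul, norm_smul]
  exact mul_div_mul_left _ _ (norm_ne_zero_iff.2 (ha t))

theorem euclNorm_mulVec {m n : Type*} [Fintype m] [Fintype n] (ψ : Matrix m n ℝ)
    (v : n → ℝ) :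
    euclNorm (ψ *ᵥ v) = ‖(EuclideanSpace.equiv m ℝ).symm.toContinuousLinearMap.comp
      (LinearMap.toContinuousLinearMap ψ.mulVecLin) v‖ := by
  simp [euclNorm, EuclideanSpace.norm_eq]

theorem relative_tempo_limit_general
    {n s₁ s₂ : ℕ} (M : Matrix (Fin n) (Fin n) ℝ) (hM : M.IsSymm)
    (μ : ℝ) (hμneg : μ < 0)
    (hmax : ∀ (ν : ℝ) (w : Fin n → ℝ), w ≠ 0 → M.mulVec w = ν • w →
      ν ≠ 0 → ν ≤ μ)
    (P : Matrix (Fin n) (Fin n) ℝ) (hPsymm : P.IsSymm)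
    (hPeig : M * P = μ • P)
    (hPrange : ∀ w : Fin n → ℝ, M.mulVec w = μ • w → P.mulVec w = w)
    (x0 : Fin n → ℝ)
    (ψ₁ : Matrix (Fin s₁) (Fin n) ℝ)
    (ψ₂ : Matrix (Fin s₂) (Fin n) ℝ)
    (hψ₂P : ψ₂.mulVec (P.mulVec x0) ≠ 0)
    (x : ℝ → Fin n → ℝ) (hx0' : x 0 = x0)
    (hx : ∀ t, HasDerivAt x (M.mulVec (x t)) t) :
    Tendsto (fun t => euclNorm (ψ₁.mulVec (M.mulVec (x t))) /
        euclNorm (ψ₂.mulVec (M.mulVec (x t)))) atTop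
      (nhds (euclNorm (ψ₁.mulVec (P.mulVec x0)) /
        euclNorm (ψ₂.mulVec (P.mulVec x0)))) := by
  have hA : M.IsHermitian := isHermitian_iff_isSymm.2 hM
  set e := hA.eigenvectorBasis
  set ν := hA.eigenvalues
  set b : Fin n → Fin n → ℝ := fun i => WithLp.ofLp (e i)
  set c : Fin n → ℝ := fun i => e.repr (WithLp.toLp 2 x0) i
  have hb (i : Fin n) : M *ᵥ b i = ν i • b i := hA.mulVec_eigenvectorBasis i
  have hx0_eq : x0 = ∑ i, c i • b i := by
    simpa using congrArg WithLp.ofLp (e.sum_repr (WithLp.toLp 2 x0)).symm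
  have hPx0 : P *ᵥ x0 = ∑ i ∈ univ.filter (fun i => ν i = μ), c i • b i := by
    simp only [hx0_eq, mulVec_sum, mulVec_smul,
      hM.mulVec_eigenvector_eq_ite hPsymm hPeig hPrange (hb _), smul_ite, smul_zero, sum_filter]
  have hdom (i : Fin n) (hi : c i * ν i ≠ 0) : ν i ≤ μ :=
    hmax _ _ (by simpa [b] using e.orthonormal.ne_zero i) (hb i) (right_ne_zero_of_mul hi)
  have hlim := (tendsto_exp_smul_of_hasDerivAt (A := LinearMap.toContinuousLinearMap M.mulVecLin)
    hb hx (hx0' ▸ hx0_eq) hdom).const_smul μ⁻¹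
  rw [← hPx0, inv_smul_smul₀ hμneg.ne] at hlim
  simp only [smul_smul] at hlim
  simp only [euclNorm_mulVec]
  exact tendsto_norm_div_norm_of_tendsto_smul _ _
    (fun t => mul_ne_zero (inv_ne_zero hμneg.ne) (exp_pos _).ne') hlim (by simpa using hψ₂P)

/-- for `ẋ = Mx` with `M` symmetric negative semidefinite, the
ratio of the (Euclidean) norms of two coordinate selections of `ẋ(t)` tends to
the corresponding ratio for the projection of `x(0)` onto the eigenspace of the
largest nonzero eigenvalue `μ`. -/
theorem relative_tempo_limit
    {n s₁ s₂ : ℕ} (M : Matrix (Fin n) (Fin n) ℝ) (hM : M.IsSymm)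
    (μ : ℝ) (hμneg : μ < 0)
    (hμeig : ∃ w : Fin n → ℝ, w ≠ 0 ∧ M.mulVec w = μ • w)
    (hle : ∀ (ν : ℝ) (w : Fin n → ℝ), w ≠ 0 → M.mulVec w = ν • w → ν ≤ 0)
    (hmax : ∀ (ν : ℝ) (w : Fin n → ℝ), w ≠ 0 → M.mulVec w = ν • w →
      ν ≠ 0 → ν ≤ μ)
    (P : Matrix (Fin n) (Fin n) ℝ) (hPsymm : P.IsSymm) (hPproj : P * P = P)
    (hPeig : M * P = μ • P)
    (hPrange : ∀ w : Fin n → ℝ, M.mulVec w = μ • w → P.mulVec w = w)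
    (x0 : Fin n → ℝ) (hx0 : P.mulVec x0 ≠ 0)
    (ψ₁ : Matrix (Fin s₁) (Fin n) ℝ) (hψ₁ : IsSelectionMatrix ψ₁)
    (ψ₂ : Matrix (Fin s₂) (Fin n) ℝ) (hψ₂ : IsSelectionMatrix ψ₂)
    (hψ₁P : ψ₁.mulVec (P.mulVec x0) ≠ 0)
    (hψ₂P : ψ₂.mulVec (P.mulVec x0) ≠ 0)
    (x : ℝ → Fin n → ℝ) (hx0' : x 0 = x0)
    (hx : ∀ t, HasDerivAt x (M.mulVec (x t)) t) :
    Tendsto (fun t => euclNorm (ψ₁.mulVec (M.mulVec (x t))) /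
        euclNorm (ψ₂.mulVec (M.mulVec (x t)))) atTop
      (nhds (euclNorm (ψ₁.mulVec (P.mulVec x0)) /
        euclNorm (ψ₂.mulVec (P.mulVec x0)))) :=
  relative_tempo_limit_general M hM μ hμneg hmax P hPsymm hPeig hPrange x0 ψ₁ ψ₂ hψ₂P x hx0' hx
end

section
/- Let G = (V,E) be a connected weighted graph with Laplacian L, let λ₂ be the second smallest eigenvalue of L with eigenvector v₂. Let S ⊂ V induce a connected subgraph, and suppose all entries v₂(i) for i ∈ S and all entries v₂(j) for j in the outer boundary of S (vertices outside S adjacent to S) have the same strict sign. Then there exists a boundary edge (i,j) with i ∈ S, j ∉ S such that |v₂(i)| > |v₂(j)|. -/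
open Matrix

lemma lapW_mulVec {n : ℕ} (W : Matrix (Fin n) (Fin n) ℝ) (x : Fin n → ℝ) (i : Fin n) :
    (lapW W).mulVec x i = ∑ j, W i j * (x i - x j) := by
  rw [lapW, Matrix.sub_mulVec, Pi.sub_apply, Matrix.mulVec_diagonal]
  simp [Matrix.mulVec, dotProduct, mul_sub, Finset.sum_sub_distrib, Finset.sum_mul]

lemma lapW_quad_nonneg {n : ℕ} (W : Matrix (Fin n) (Fin n) ℝ)
    (hsym : W.IsSymm) (hnonneg : ∀ i j, 0 ≤ W i j) (x : Fin n → ℝ) :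
    0 ≤ ∑ i, x i * (lapW W).mulVec x i := by
  have h1 : ∑ i, x i * (lapW W).mulVec x i = ∑ i, ∑ j, W i j * (x i * (x i - x j)) := by
    simp only [lapW_mulVec, Finset.mul_sum]
    congr 1; ext i; congr 1; ext j; ring
  have h2 : ∑ i, ∑ j, W i j * (x i * (x i - x j))
      = ∑ i, ∑ j, W i j * (x j * (x j - x i)) := by
    rw [Finset.sum_comm]
    congr 1; ext i; congr 1; ext j
    rw [hsym.apply i j]
  have h3 : 2 * ∑ i, x i * (lapW W).mulVec x i = ∑ i, ∑ j, W i j * (x i - x j) ^ 2 := by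
    rw [h1, two_mul]
    nth_rewrite 2 [h2]
    rw [← Finset.sum_add_distrib]
    simp only [← Finset.sum_add_distrib, Finset.mul_sum]
    congr 1; ext i; congr 1; ext j; ring
  have h4 : 0 ≤ ∑ i, ∑ j : Fin n, W i j * (x i - x j) ^ 2 := by
    apply Finset.sum_nonneg; intro i _
    apply Finset.sum_nonneg; intro j _
    exact mul_nonneg (hnonneg i j) (sq_nonneg _)
  linarith

/-- boundary-edge lemma.  If `S` induces a connected subgraph and
the Fiedler-vector entries on `S` and on its outer boundary all have the same
strict sign, then some boundary edge `(i,j)`, `i ∈ S`, `j ∉ S`, satisfies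
`|v₂ j| < |v₂ i|`. -/
theorem boundary_edge_lemma
    {n : ℕ} (W : Matrix (Fin n) (Fin n) ℝ)
    (hsym : W.IsSymm) (hnonneg : ∀ i j, 0 ≤ W i j)
    (hconn : connectedW W)
    (lam2 : ℝ) (v2 : Fin n → ℝ) (hv2 : v2 ≠ 0)
    -- λ₂ is the second smallest eigenvalue: the least nonzero eigenvalue
    (hlam2 : IsLeast {μ : ℝ | μ ≠ 0 ∧ ∃ w : Fin n → ℝ, w ≠ 0 ∧
      (lapW W).mulVec w = μ • w} lam2)
    (hev : (lapW W).mulVec v2 = lam2 • v2)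
    (S : Finset (Fin n)) (hSne : S.Nonempty) (hSproper : S ≠ Finset.univ)
    -- S induces a connected subgraph
    (hSconn : ∀ i ∈ S, ∀ j ∈ S, Relation.ReflTransGen
      (fun a b => a ∈ S ∧ b ∈ S ∧ W a b ≠ 0) i j)
    -- same strict sign on S and on the outer boundary of S
    (hsign : (∀ i ∈ S, 0 < v2 i) ∧
        (∀ j, j ∉ S → (∃ i ∈ S, W i j ≠ 0) → 0 < v2 j) ∨
      (∀ i ∈ S, v2 i < 0) ∧
        (∀ j, j ∉ S → (∃ i ∈ S, W i j ≠ 0) → v2 j < 0)) :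
    ∃ i ∈ S, ∃ j, j ∉ S ∧ W i j ≠ 0 ∧ |v2 j| < |v2 i| := by
  -- λ₂ > 0
  obtain ⟨⟨hne, w, hw0, hweq⟩, _⟩ := hlam2
  have hwq : ∑ i, w i * (lapW W).mulVec w i = lam2 * ∑ i, w i * w i := by
    rw [hweq]
    simp only [Pi.smul_apply, smul_eq_mul, Finset.mul_sum]
    congr 1; ext i; ring
  have hwpos : 0 < ∑ i, w i * w i := by
    obtain ⟨i0, hi0⟩ := Function.ne_iff.mp hw0
    apply Finset.sum_pos'
    · intro i _; exact mul_self_nonneg _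
    · exact ⟨i0, Finset.mem_univ _, mul_self_pos.mpr hi0⟩
  have hlam2pos : 0 < lam2 := by
    rcases lt_trichotomy lam2 0 with h | h | h
    · exfalso
      have := lapW_quad_nonneg W hsym hnonneg w
      nlinarith
    · exact absurd h hne
    · exact h
  -- sum of eigen-equation over S
  have hSsum : ∑ i ∈ S, ∑ j, W i j * (v2 i - v2 j) = lam2 * ∑ i ∈ S, v2 i := by
    rw [Finset.mul_sum]
    calc ∑ i ∈ S, ∑ j, W i j * (v2 i - v2 j) = ∑ i ∈ S, (lapW W).mulVec v2 i := by
          simp only [lapW_mulVec]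
      _ = ∑ i ∈ S, lam2 * v2 i := by rw [hev]; rfl
  -- internal edges cancel
  have hint : ∑ i ∈ S, ∑ j ∈ S, W i j * (v2 i - v2 j) = 0 := by
    have hc : ∑ i ∈ S, ∑ j ∈ S, W i j * (v2 i - v2 j)
        = ∑ i ∈ S, ∑ j ∈ S, W j i * (v2 j - v2 i) := Finset.sum_comm
    have hn : ∑ i ∈ S, ∑ j ∈ S, W j i * (v2 j - v2 i)
        = -∑ i ∈ S, ∑ j ∈ S, W i j * (v2 i - v2 j) := by
      rw [← Finset.sum_neg_distrib]
      congr 1; ext i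
      rw [← Finset.sum_neg_distrib]
      congr 1; ext j
      rw [hsym.apply j i]; ring
    linarith [hc.trans hn]
  have hbd : ∑ i ∈ S, ∑ j ∈ Sᶜ, W i j * (v2 i - v2 j) = lam2 * ∑ i ∈ S, v2 i := by
    have hsplit : ∀ i, (∑ j ∈ S, W i j * (v2 i - v2 j)) + ∑ j ∈ Sᶜ, W i j * (v2 i - v2 j)
        = ∑ j, W i j * (v2 i - v2 j) := fun i => Finset.sum_add_sum_compl S _
    have : ∑ i ∈ S, ((∑ j ∈ S, W i j * (v2 i - v2 j)) + ∑ j ∈ Sᶜ, W i j * (v2 i - v2 j))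
        = lam2 * ∑ i ∈ S, v2 i := by
      rw [← hSsum]; exact Finset.sum_congr rfl fun i _ => hsplit i
    rw [Finset.sum_add_distrib, hint, zero_add] at this
    exact this
  rcases hsign with ⟨hpos, hbpos⟩ | ⟨hneg, hbneg⟩
  · -- positive case
    have hSpos : 0 < ∑ i ∈ S, v2 i := Finset.sum_pos hpos hSne
    have hbdpos : 0 < ∑ i ∈ S, ∑ j ∈ Sᶜ, W i j * (v2 i - v2 j) := by
      rw [hbd]; exact mul_pos hlam2pos hSpos
    -- find a positive term
    by_contra hcon
    push_neg at hcon
    have hle : ∑ i ∈ S, ∑ j ∈ Sᶜ, W i j * (v2 i - v2 j) ≤ 0 := by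
      apply Finset.sum_nonpos; intro i hi
      apply Finset.sum_nonpos; intro j hj
      rw [Finset.mem_compl] at hj
      rcases eq_or_ne (W i j) 0 with h0 | h0
      · rw [h0]; simp
      · have hvj : 0 < v2 j := hbpos j hj ⟨i, hi, h0⟩
        have hvi : 0 < v2 i := hpos i hi
        have := hcon i hi j hj h0
        rw [abs_of_pos hvj, abs_of_pos hvi] at this
        have hW := (hnonneg i j).lt_of_ne (Ne.symm h0)
        nlinarith
    linarith
  · -- negative case
    have hSneg : ∑ i ∈ S, v2 i < 0 := by
      have h := Finset.sum_pos (f := fun i => -v2 i) (fun i hi => neg_pos.mpr (hneg i hi)) hSne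
      rw [Finset.sum_neg_distrib] at h
      linarith
    have hbdneg : ∑ i ∈ S, ∑ j ∈ Sᶜ, W i j * (v2 i - v2 j) < 0 := by
      rw [hbd]; exact mul_neg_of_pos_of_neg hlam2pos hSneg
    by_contra hcon
    push_neg at hcon
    have hge : 0 ≤ ∑ i ∈ S, ∑ j ∈ Sᶜ, W i j * (v2 i - v2 j) := by
      apply Finset.sum_nonneg; intro i hi
      apply Finset.sum_nonneg; intro j hj
      rw [Finset.mem_compl] at hj
      rcases eq_or_ne (W i j) 0 with h0 | h0
      · rw [h0]; simp
      · have hvj : v2 j < 0 := hbneg j hj ⟨i, hi, h0⟩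
        have hvi : v2 i < 0 := hneg i hi
        have := hcon i hi j hj h0
        rw [abs_of_neg hvj, abs_of_neg hvi] at this
        have hW := (hnonneg i j).lt_of_ne (Ne.symm h0)
        nlinarith
    linarith
end

section
/- Let T be a tree on n ≥ 4 vertices that is not a star. Then the algebraic connectivity (second smallest Laplacian eigenvalue) of T satisfies λ₂(L(T)) < 0.59. -/
/-!
A tree that is not a star contains a path `a - b - c - d`. Deleting its three edges leaves four
components, and the vector `u` equal to `1, 2/5, -2/5, -1` on the components of `a, b, c, d` has
Laplacian energy `9/25 + 16/25 + 9/25 = 34/25`. After subtracting its mean, `u` is orthogonal to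
the kernel of the Laplacian (the constants, the tree being connected) and still has squared norm at
least `58/25`, so expanding it in an eigenbasis gives `λ₂ ≤ 34/58 = 17/29 < 0.59`.
-/

open SimpleGraph Matrix

/-- `G` is a star graph: some center is adjacent exactly to all other
vertices, and there are no other edges. -/
def IsStar {V : Type*} (G : SimpleGraph V) : Prop :=
  ∃ c : V, ∀ u v : V, G.Adj u v ↔ (u = c ∧ v ≠ c) ∨ (v = c ∧ u ≠ c)

open Finset

theorem Fintype.sum_comp_le_sum_of_injective {ι α : Type*} [Fintype ι] [Fintype α] {g : ι → α}
    (hg : Function.Injective g) {f : α → ℝ} (hf : 0 ≤ f) : ∑ i, f (g i) ≤ ∑ a, f a := by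
  simpa using sum_le_univ_sum_of_nonneg (s := univ.map ⟨g, hg⟩) hf

theorem OrthonormalBasis.sum_dotProduct_mul_dotProduct {ι : Type*} [Fintype ι]
    (B : OrthonormalBasis ι ℝ (EuclideanSpace ℝ ι)) (x y : ι → ℝ) :
    ∑ i, (x ⬝ᵥ B i) * (B i ⬝ᵥ y) = x ⬝ᵥ y := by
  simpa [EuclideanSpace.inner_toLp_toLp, EuclideanSpace.inner_eq_star_dotProduct, dotProduct_comm]
    using B.sum_inner_mul_inner (WithLp.toLp 2 x) (WithLp.toLp 2 y)

theorem Matrix.IsHermitian.mul_dotProduct_self_le_dotProduct_mulVec {ι : Type*} [Fintype ι]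
    [DecidableEq ι] {A : Matrix ι ι ℝ} (hA : A.IsHermitian) {lam : ℝ}
    (hlam : lam ∈ lowerBounds {μ : ℝ | μ ≠ 0 ∧ ∃ x : ι → ℝ, x ≠ 0 ∧ A *ᵥ x = μ • x})
    {w : ι → ℝ} (hw : ∀ x, A *ᵥ x = 0 → x ⬝ᵥ w = 0) :
    lam * (w ⬝ᵥ w) ≤ w ⬝ᵥ (A *ᵥ w) := by
  set B := hA.eigenvectorBasis
  have hAB : ∀ i, B i ⬝ᵥ (A *ᵥ w) = hA.eigenvalues i * (B i ⬝ᵥ w) := fun i => by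
    rw [dotProduct_mulVec, ← mulVec_transpose, ← conjTranspose_eq_transpose_of_trivial, hA.eq,
      hA.mulVec_eigenvectorBasis, smul_dotProduct, smul_eq_mul]
  rw [← B.sum_dotProduct_mul_dotProduct, ← B.sum_dotProduct_mul_dotProduct, mul_sum]
  refine sum_le_sum fun i _ => ?_
  rw [hAB, dotProduct_comm w]
  rcases eq_or_ne (hA.eigenvalues i) 0 with h0 | h0
  · rw [hw _ (by rw [hA.mulVec_eigenvectorBasis, h0, zero_smul])]
    simp
  · have hB : (B i : ι → ℝ) ≠ 0 := fun h => B.orthonormal.ne_zero i (by ext j; simp [h])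
    have := hlam ⟨h0, B i, hB, hA.mulVec_eigenvectorBasis i⟩
    nlinarith [sq_nonneg (B i ⬝ᵥ w)]

namespace SimpleGraph

variable {V : Type*} {G : SimpleGraph V}

theorem adj_of_reachable_of_forall_adj_adj_eq {c : V}
    (hc : ∀ u, G.Adj c u → ∀ v, G.Adj u v → v = c) {v : V} (hvc : G.Reachable v c)
    (hv : v ≠ c) : G.Adj c v := by
  obtain ⟨p⟩ := hvc
  induction p with
  | nil => exact absurd rfl hv
  | @cons v x c hvx p ih =>
    by_cases hx : x = c
    · exact hx ▸ hvx.symm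
    · exact absurd (hc x (ih hc hx) v hvx.symm) hv

theorem isStar_of_forall_adj_adj_eq (hG : G.Connected) {c : V}
    (hc : ∀ u, G.Adj c u → ∀ v, G.Adj u v → v = c) : IsStar G := by
  have hadj : ∀ v, v ≠ c → G.Adj c v := fun v hv =>
    adj_of_reachable_of_forall_adj_adj_eq hc (hG v c) hv
  refine ⟨c, fun u v => ⟨fun huv => ?_, ?_⟩⟩
  · by_cases hu : u = c
    · exact .inl ⟨hu, hu ▸ huv.ne'⟩
    · exact .inr ⟨hc u (hadj u hu) v huv, hu⟩
  · rintro (⟨rfl, hv⟩ | ⟨rfl, hu⟩)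
    · exact hadj v hv
    · exact (hadj u hu).symm

theorem Connected.exists_adj_adj_adj_of_not_isStar (hG : G.Connected) (h : ¬ IsStar G) :
    ∃ a b c d, G.Adj a b ∧ G.Adj b c ∧ G.Adj c d ∧ a ≠ c ∧ b ≠ d := by
  by_contra! hno
  -- The centre is `v` if every neighbour of `v` is a leaf; otherwise it is a neighbour `u` of `v`
  -- with a further neighbour `w ≠ v`.
  obtain ⟨v⟩ := hG.nonempty
  refine h ?_
  by_cases hv : ∀ u, G.Adj v u → ∀ w, G.Adj u w → w = v
  · exact isStar_of_forall_adj_adj_eq hG hv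
  push Not at hv
  obtain ⟨u, hvu, w, huw, hwv⟩ := hv
  refine isStar_of_forall_adj_adj_eq hG (c := u) fun x hux y hxy => ?_
  by_cases hxv : x = v
  · subst hxv
    exact (hno w u x y huw.symm hvu.symm hxy hwv).symm
  · exact (hno v u x y hvu hux hxy (Ne.symm hxv)).symm

theorem IsTree.exists_isPath_length_eq_three (hG : G.IsTree) (h : ¬ IsStar G) :
    ∃ (a d : V) (p : G.Walk a d), p.IsPath ∧ p.length = 3 := by
  obtain ⟨a, b, c, d, hab, hbc, hcd, hac, hbd⟩ := hG.connected.exists_adj_adj_adj_of_not_isStar h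
  have had : a ≠ d := by
    rintro rfl
    exact hG.isAcyclic (.cons hab (.cons hbc (.cons hcd .nil)))
      (by simp [Walk.cons_isCycle_iff, hab.ne, hbc.ne, hcd.ne, hac, hbd])
  exact ⟨a, d, .cons hab (.cons hbc (.cons hcd .nil)),
    by simp [Walk.isPath_def, hab.ne, hbc.ne, hcd.ne, hac, hbd, had], rfl⟩

theorem IsAcyclic.not_reachable_deleteEdges (hG : G.IsAcyclic) {s : Set (Sym2 V)} {u v : V}
    {p : G.Walk u v} (hp : p.IsPath) {e : Sym2 V} (hep : e ∈ p.edges) (hes : e ∈ s) :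
    ¬ (G.deleteEdges s).Reachable u v := by
  classical
  rintro ⟨q⟩
  have hq : (q.mapLe (G.deleteEdges_le s)).bypass = p :=
    congrArg Subtype.val ((hG.subsingleton_path u v).elim ⟨_, Walk.bypass_isPath _⟩ ⟨p, hp⟩)
  have he := (q.mapLe _).edges_bypass_subset_edges (hq ▸ hep)
  rw [Walk.edges_mapLe_eq_edges] at he
  exact (edgeSet_deleteEdges s ▸ q.edges_subset_edgeSet he).2 hes

theorem IsAcyclic.injective_connectedComponentMk_getVert (hG : G.IsAcyclic) {u v : V}
    {p : G.Walk u v} (hp : p.IsPath) :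
    Function.Injective fun k : Fin (p.length + 1) =>
      (G.deleteEdges {e | e ∈ p.edges}).connectedComponentMk (p.getVert k) := by
  have hsep : ∀ i j : ℕ, i < j → j ≤ p.length →
      ¬ (G.deleteEdges {e | e ∈ p.edges}).Reachable (p.getVert i) (p.getVert j) := by
    intro i j hij hj
    set q := (p.drop i).take (j - i)
    obtain ⟨e, he⟩ : ∃ e, e ∈ q.edges :=
      List.length_pos_iff_exists_mem.mp (by
        simp only [Walk.length_edges, Walk.take_length, Walk.drop_length, q]; omega)
    have hep : e ∈ p.edges := by
      rw [Walk.edges_take, Walk.edges_drop] at he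
      exact List.mem_of_mem_drop (List.mem_of_mem_take he)
    have := hG.not_reachable_deleteEdges (s := {e | e ∈ p.edges}) ((hp.drop i).take (j - i)) he hep
    rwa [Walk.drop_getVert, Nat.add_sub_cancel' hij.le] at this
  intro i j hij
  have hr := ConnectedComponent.exact hij
  rcases lt_trichotomy (i : ℕ) j with h | h | h
  · exact absurd hr (hsep _ _ h (Nat.lt_succ_iff.mp j.2))
  · exact Fin.ext h
  · exact absurd hr.symm (hsep _ _ h (Nat.lt_succ_iff.mp i.2))

section Laplacian

variable [Fintype V] [DecidableEq V] [DecidableRel G.Adj]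

theorem dotProduct_lapMatrix_mulVec_sub_const (u : V → ℝ) (m : ℝ) :
    (u - Function.const V m) ⬝ᵥ (G.lapMatrix ℝ *ᵥ (u - Function.const V m)) =
      u ⬝ᵥ (G.lapMatrix ℝ *ᵥ u) := by
  simp only [← toLinearMap₂'_apply', lapMatrix_toLinearMap₂', Pi.sub_apply,
    Function.const_apply, sub_sub_sub_cancel_right]

theorem Connected.mul_sum_sq_sub_mean_le (hG : G.Connected) {lam : ℝ}
    (hlam : lam ∈ lowerBounds {μ : ℝ | μ ≠ 0 ∧ ∃ x : V → ℝ, x ≠ 0 ∧ G.lapMatrix ℝ *ᵥ x = μ • x})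
    (u : V → ℝ) :
    lam * ∑ v, (u v - (∑ v, u v) / Fintype.card V) ^ 2 ≤ u ⬝ᵥ (G.lapMatrix ℝ *ᵥ u) := by
  obtain ⟨v₀⟩ := hG.nonempty
  have hcard : (Fintype.card V : ℝ) ≠ 0 := Nat.cast_ne_zero.mpr (Fintype.card_pos_iff.mpr ⟨v₀⟩).ne'
  set w := u - Function.const V ((∑ v, u v) / Fintype.card V)
  have hw : ∑ v, w v = 0 := by
    simp [w, sum_sub_distrib, mul_div_cancel₀ _ hcard]
  have hker : ∀ x, G.lapMatrix ℝ *ᵥ x = 0 → x ⬝ᵥ w = 0 := by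
    intro x hx
    have hconst : ∀ v, x v = x v₀ := fun v =>
      (lapMatrix_mulVec_eq_zero_iff_forall_reachable G).mp hx v v₀ (hG.preconnected v v₀)
    simp [dotProduct, hconst, ← mul_sum, hw]
  calc lam * ∑ v, (u v - (∑ v, u v) / Fintype.card V) ^ 2 = lam * (w ⬝ᵥ w) := by
        simp [w, dotProduct, sq]
    _ ≤ w ⬝ᵥ (G.lapMatrix ℝ *ᵥ w) :=
        (isHermitian_lapMatrix ℝ G).mul_dotProduct_self_le_dotProduct_mulVec hlam hker
    _ = u ⬝ᵥ (G.lapMatrix ℝ *ᵥ u) := dotProduct_lapMatrix_mulVec_sub_const u _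

theorem dotProduct_lapMatrix_mulVec_le_sum {ι : Type*} [Fintype ι] (e : ι → V × V) (u : V → ℝ)
    (he : ∀ i j, G.Adj i j → u i ≠ u j → ∃ k, e k = (i, j) ∨ e k = (j, i)) :
    u ⬝ᵥ (G.lapMatrix ℝ *ᵥ u) ≤ ∑ k, (u (e k).1 - u (e k).2) ^ 2 := by
  set F : V × V → ℝ := fun q => (u q.1 - u q.2) ^ 2
  have hpt : ∀ q : V × V, (if G.Adj q.1 q.2 then F q else 0) ≤
      ∑ k, ((if e k = q then F q else 0) + (if (e k).swap = q then F q else 0)) := by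
    rintro ⟨i, j⟩
    have hnonneg : ∀ k, 0 ≤ (if e k = (i, j) then F (i, j) else 0) +
        (if (e k).swap = (i, j) then F (i, j) else 0) := fun k => by positivity
    by_cases hij : G.Adj i j ∧ u i ≠ u j
    · obtain ⟨k, hk⟩ := he i j hij.1 hij.2
      rw [if_pos hij.1]
      refine le_trans ?_ (single_le_sum (fun k _ => hnonneg k) (mem_univ k))
      rcases hk with hk | hk
      · rw [if_pos hk]
        exact le_add_of_nonneg_right (by positivity)
      · rw [if_pos (show (e k).swap = (i, j) by simp [hk])]
        exact le_add_of_nonneg_left (by positivity)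
    · push Not at hij
      have hzero : (if G.Adj i j then F (i, j) else 0) = 0 := by
        split_ifs with h
        · simp [F, hij h]
        · rfl
      exact hzero.le.trans (sum_nonneg fun k _ => hnonneg k)
  rw [← toLinearMap₂'_apply', lapMatrix_toLinearMap₂', div_le_iff₀ two_pos,
    ← Fintype.sum_prod_type', mul_comm]
  calc ∑ q : V × V, (if G.Adj q.1 q.2 then F q else 0)
      ≤ ∑ q : V × V, ∑ k, ((if e k = q then F q else 0) + (if (e k).swap = q then F q else 0)) :=
        sum_le_sum fun q _ => hpt q
    _ = 2 * ∑ k, F (e k) := by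
      rw [sum_comm, mul_sum]
      refine sum_congr rfl fun k _ => ?_
      simp only [F, sum_add_distrib, sum_ite_eq, mem_univ, if_true, Prod.fst_swap, Prod.snd_swap]
      ring

/-- `n` stands for `p.length`, so that the values `x` can be given for a path of known length. -/
theorem IsAcyclic.exists_dotProduct_lapMatrix_mulVec_le (hG : G.IsAcyclic) {v w : V}
    {p : G.Walk v w} (hp : p.IsPath) {n : ℕ} (hn : p.length = n) (x : Fin (n + 1) → ℝ) :
    ∃ u : V → ℝ, (∀ k : Fin (n + 1), u (p.getVert k) = x k) ∧
      u ⬝ᵥ (G.lapMatrix ℝ *ᵥ u) ≤ ∑ k : Fin n, (x k.castSucc - x k.succ) ^ 2 := by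
  subst hn
  set H := G.deleteEdges {e | e ∈ p.edges}
  have hinj := hG.injective_connectedComponentMk_getVert hp
  set u := Function.extend (fun k : Fin (p.length + 1) => H.connectedComponentMk (p.getVert k))
    x 0 ∘ H.connectedComponentMk
  have hu : ∀ k : Fin (p.length + 1), u (p.getVert k) = x k := hinj.extend_apply x 0
  refine ⟨u, hu, ?_⟩
  refine (dotProduct_lapMatrix_mulVec_le_sum
    (fun k : Fin p.length => (p.getVert k, p.getVert (k + 1))) u ?_).trans_eq ?_
  · intro i j hij hne
    have hmem : s(i, j) ∈ p.edges := by
      by_contra h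
      have hH : H.Adj i j := deleteEdges_adj.mpr ⟨hij, h⟩
      exact hne (by simp only [u, Function.comp_apply,
        ConnectedComponent.connectedComponentMk_eq_of_adj hH])
    obtain ⟨k, hk, hkij⟩ := p.mk_mem_edges_iff_exists.mp hmem
    exact ⟨⟨k, hk⟩, by simpa [Sym2.eq_iff] using hkij⟩
  · refine sum_congr rfl fun k _ => ?_
    rw [← hu, ← hu]
    rfl

end Laplacian

end SimpleGraph

theorem non_star_tree_lambda2_lt_general
    {n : ℕ} (G : SimpleGraph (Fin n)) [DecidableRel G.Adj]
    (htree : G.IsTree) (hstar : ¬ IsStar G)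
    (lam2 : ℝ)
    (hlam2 : IsLeast {μ : ℝ | μ ≠ 0 ∧ ∃ w : Fin n → ℝ, w ≠ 0 ∧
      (G.lapMatrix ℝ).mulVec w = μ • w} lam2) :
    lam2 < 0.59 := by
  obtain ⟨a, d, p, hp, hlen⟩ := htree.exists_isPath_length_eq_three hstar
  obtain ⟨u, hu, henergy⟩ :=
    htree.isAcyclic.exists_dotProduct_lapMatrix_mulVec_le hp hlen ![1, 2/5, -2/5, -1]
  set m := (∑ v, u v) / Fintype.card (Fin n)
  have hinj : Function.Injective fun k : Fin 4 => p.getVert k := fun i j h =>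
    Fin.ext (hp.getVert_injOn (by simp only [Set.mem_ofPred_eq]; omega)
      (by simp only [Set.mem_ofPred_eq]; omega) h)
  have henergy' : u ⬝ᵥ (G.lapMatrix ℝ *ᵥ u) ≤ 34 / 25 :=
    henergy.trans_eq (by norm_num [Fin.sum_univ_succ])
  have hnorm : 58 / 25 ≤ ∑ v, (u v - m) ^ 2 := calc
    58 / 25 ≤ (1 - m) ^ 2 + (2 / 5 - m) ^ 2 + (-2 / 5 - m) ^ 2 + (-1 - m) ^ 2 := by
      nlinarith [sq_nonneg m]
    _ = ∑ k : Fin 4, (u (p.getVert k) - m) ^ 2 := by simp [Fin.sum_univ_four, hu]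
    _ ≤ ∑ v, (u v - m) ^ 2 :=
      Fintype.sum_comp_le_sum_of_injective (f := fun v => (u v - m) ^ 2) hinj fun v => sq_nonneg _
  have hray := htree.connected.mul_sum_sq_sub_mean_le hlam2.2 u
  nlinarith

/-- a non-star tree on `n ≥ 4` vertices has algebraic
connectivity (second smallest Laplacian eigenvalue) strictly below `0.59`. -/
theorem non_star_tree_lambda2_lt
    {n : ℕ} (hn : 4 ≤ n) (G : SimpleGraph (Fin n)) [DecidableRel G.Adj]
    (htree : G.IsTree) (hstar : ¬ IsStar G)
    (lam2 : ℝ)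
    (hlam2 : IsLeast {μ : ℝ | μ ≠ 0 ∧ ∃ w : Fin n → ℝ, w ≠ 0 ∧
      (G.lapMatrix ℝ).mulVec w = μ • w} lam2) :
    lam2 < 0.59 :=
  non_star_tree_lambda2_lt_general G htree hstar lam2 hlam2
end

section
/- Consider the block-decomposed consensus dynamics ẋ_L = −(L₁₁)x_L, ẋ_F = −L₂₂ x_F − L₂₁ x_L, where the full Laplacian L = [[L₁₁, 0],[L₂₁, L₂₂]] satisfies L·1_n = 0, L₂₂ is nonsingular and Hurwitz-stable (−L₂₂ has eigenvalues with negative real part), and x_L(t) converges to the average (1/m)·1_m 1_mᵀ x_L(0). Then lim_{t→∞} x_F(t) = (1/m)·1_{n−m} 1_mᵀ x_L(0), i.e., all followers converge to the average of the first m agents' initial states. -/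
/-!
Since `L₂₂` is invertible, `W = L₂₂⁻¹ L₂₁` is defined, and the zero row sums give `W 1 = -1`.
The shifted follower state `X = x_F + W x_L` solves `Ẋ = -L₂₂ X - W L₁₁ x_L`, and the input
`W L₁₁ x_L` tends to zero because `L₁₁` annihilates the constant limit `c 1` of `x_L`.

Every eigenvalue of `L₂₂` has positive real part, so `exp (-t L₂₂)` tends to zero: on the
generalized eigenspace of `μ` it acts as `e^{-tμ}` times a polynomial in `t`. By the semigroup
property it then decays exponentially, and the variation of constants formula shows that the
state of such a stable linear system driven by a vanishing input tends to zero. Hence `X → 0`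
and `x_F = X - W x_L → -W (c 1) = c 1`.
-/

open Filter Topology NormedSpace
open scoped Nat

theorem norm_mul_pow_le {R : Type*} [NormedRing R] (x y : R) (n : ℕ) :
    ‖x * y ^ n‖ ≤ ‖x‖ * ‖y‖ ^ n := by
  induction n with
  | zero => simp
  | succ n ih =>
    calc ‖x * y ^ (n + 1)‖ = ‖x * y ^ n * y‖ := by rw [pow_succ, mul_assoc]
      _ ≤ ‖x * y ^ n‖ * ‖y‖ := norm_mul_le _ _
      _ ≤ ‖x‖ * ‖y‖ ^ n * ‖y‖ := by gcongr
      _ = ‖x‖ * ‖y‖ ^ (n + 1) := by ring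

theorem exists_norm_exp_smul_le_of_tendsto {𝔸 : Type*} [NormedRing 𝔸] [NormedAlgebra ℝ 𝔸]
    [NormedAlgebra ℚ 𝔸] [CompleteSpace 𝔸] {A : 𝔸}
    (hA : Tendsto (fun t : ℝ => exp (t • A)) atTop (𝓝 0)) :
    ∃ C > 0, ∃ α > 0, ∀ t : ℝ, 0 ≤ t → ‖exp (t • A)‖ ≤ C * Real.exp (-α * t) := by
  obtain ⟨T, hT, hT_le⟩ : ∃ T : ℝ, 0 < T ∧ ‖exp (T • A)‖ ≤ Real.exp (-1) := by
    have hsmall : ∀ᶠ t : ℝ in atTop, ‖exp (t • A)‖ ≤ Real.exp (-1) :=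
      (tendsto_norm_zero.comp hA).eventually (ge_mem_nhds (Real.exp_pos _))
    exact ((eventually_gt_atTop 0).and hsmall).exists
  have hcont : Continuous fun t : ℝ => exp (t • A) :=
    exp_continuous.comp (continuous_id.smul continuous_const)
  obtain ⟨M, hM⟩ := (isCompact_Icc (a := (0 : ℝ)) (b := T)).exists_bound_of_continuousOn
    hcont.continuousOn
  refine ⟨max M 1 * Real.exp 1, by positivity, T⁻¹, inv_pos.2 hT, fun t ht => ?_⟩
  set n := ⌊t / T⌋₊
  have hn_le : n * T ≤ t := (le_div_iff₀ hT).1 (Nat.floor_le (div_nonneg ht hT.le))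
  have hn_lt : t / T < n + 1 := Nat.lt_floor_add_one _
  have hsplit : exp (t • A) = exp ((t - n * T) • A) * exp (T • A) ^ n := by
    have hcomm : Commute ((t - n * T) • A) (n • T • A) :=
      (((Commute.refl A).smul_left _).smul_right _).smul_right _
    rw [← NormedSpace.exp_nsmul, ← NormedSpace.exp_add_of_commute hcomm]
    congr 1
    rw [← Nat.cast_smul_eq_nsmul ℝ, smul_smul, ← add_smul, sub_add_cancel]
  have hr : t - n * T ∈ Set.Icc 0 T := by
    constructor
    · linarith
    · have := (div_lt_iff₀ hT).1 hn_lt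
      linarith
  calc ‖exp (t • A)‖ ≤ ‖exp ((t - n * T) • A)‖ * ‖exp (T • A)‖ ^ n := by
        rw [hsplit]; exact norm_mul_pow_le _ _ _
    _ ≤ max M 1 * Real.exp (-1) ^ n := by
        gcongr
        exact (hM _ hr).trans (le_max_left _ _)
    _ = max M 1 * Real.exp (-n) := by rw [← Real.exp_nat_mul, mul_neg_one]
    _ ≤ max M 1 * Real.exp (1 - t / T) := by gcongr; linarith
    _ = max M 1 * Real.exp 1 * Real.exp (-T⁻¹ * t) := by
        rw [mul_assoc, ← Real.exp_add]; ring_nf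

theorem tendsto_cexp_neg_mul_mul_pow_atTop {μ : ℂ} (hμ : 0 < μ.re) (n : ℕ) :
    Tendsto (fun t : ℝ => Complex.exp (-(t * μ)) * (t : ℂ) ^ n) atTop (𝓝 0) := by
  rw [tendsto_zero_iff_norm_tendsto_zero]
  refine ((isLittleO_pow_exp_pos_mul_atTop n hμ).tendsto_div_nhds_zero).congr' ?_
  filter_upwards [eventually_ge_atTop 0] with t ht
  rw [norm_mul, Complex.norm_exp, norm_pow, Complex.norm_real, Real.norm_of_nonneg ht,
    div_eq_mul_inv, ← Real.exp_neg]
  simp [mul_comm]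

theorem integral_exp_neg_mul_sub_le {α : ℝ} (hα : 0 < α) (T t : ℝ) :
    ∫ s in T..t, Real.exp (-α * (t - s)) ≤ α⁻¹ := by
  rw [intervalIntegral.integral_comp_sub_left (fun u => Real.exp (-α * u)),
    intervalIntegral.integral_comp_mul_left _ (neg_ne_zero.2 hα.ne'), integral_exp]
  simp only [sub_self, mul_zero, Real.exp_zero, smul_eq_mul]
  rw [inv_neg, neg_mul, ← mul_neg, neg_sub]
  have := Real.exp_pos (-α * (t - T))
  nlinarith [inv_pos.2 hα]

open Matrix
open scoped Matrix.Norms.Operator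

theorem HasDerivAt.matrix_mulVec {𝕜 ι κ : Type*} [NontriviallyNormedField 𝕜] [CompleteSpace 𝕜]
    [Fintype ι] [Fintype κ] {M : 𝕜 → Matrix κ ι 𝕜} {M' : Matrix κ ι 𝕜} {v : 𝕜 → ι → 𝕜}
    {v' : ι → 𝕜} {t : 𝕜} (hM : HasDerivAt M M' t) (hv : HasDerivAt v v' t) :
    HasDerivAt (fun s => M s *ᵥ v s) (M t *ᵥ v' + M' *ᵥ v t) t := by
  let B : Matrix κ ι 𝕜 →L[𝕜] (ι → 𝕜) →L[𝕜] (κ → 𝕜) := LinearMap.toContinuousLinearMap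
    (LinearMap.toContinuousLinearMap.toLinearMap ∘ₗ mulVecBilin 𝕜 𝕜)
  exact ContinuousLinearMap.hasDerivAt_of_bilinear (B := B) (fun _ => hM) (fun _ => hv)

namespace Matrix

variable {ι : Type*} [Fintype ι]

def IsPositiveStable (A : Matrix ι ι ℂ) : Prop :=
  ∀ (μ : ℂ) (v : ι → ℂ), v ≠ 0 → A *ᵥ v = μ • v → 0 < μ.re

variable [DecidableEq ι]

theorem exp_smul_mulVec_eq_sum {𝕂 : Type*} [RCLike 𝕂] (N : Matrix ι ι 𝕂) {w : ι → 𝕂} {d : ℕ}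
    (hw : N ^ d *ᵥ w = 0) (z : 𝕂) :
    exp (z • N) *ᵥ w = ∑ n ∈ Finset.range d, (z ^ n / n !) • (N ^ n *ᵥ w) := by
  have hseries := (exp_series_hasSum_exp' (𝕂 := 𝕂) (z • N)).map
    (mulVec.addMonoidHomLeft w) (continuous_id.matrix_mulVec continuous_const)
  refine hseries.unique (hasSum_sum_of_ne_finset_zero fun n hn => ?_) |>.trans
    (Finset.sum_congr rfl fun n _ => ?_)
  · have hdn : d ≤ n := by simpa using hn
    obtain ⟨j, rfl⟩ := Nat.exists_eq_add_of_le' hdn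
    simp [mulVec.addMonoidHomLeft, smul_pow, smul_mulVec, pow_add, ← mulVec_mulVec, hw]
  · simp [mulVec.addMonoidHomLeft, smul_pow, smul_mulVec, smul_smul, div_eq_inv_mul]

theorem IsPositiveStable.re_pos_of_mem_maxGenEigenspace {A : Matrix ι ι ℂ}
    (hA : A.IsPositiveStable) {μ : ℂ} {w : ι → ℂ}
    (hw : w ∈ Module.End.maxGenEigenspace (toLin' A) μ) (hw0 : w ≠ 0) : 0 < μ.re := by
  have hμ : Module.End.HasEigenvalue (toLin' A) μ :=
    Module.End.HasUnifEigenvalue.lt zero_lt_one ((Submodule.ne_bot_iff _).2 ⟨w, hw, hw0⟩)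
  obtain ⟨v, hv⟩ := hμ.exists_hasEigenvector
  exact hA μ v hv.2 (by simpa using hv.apply_eq_smul)

theorem exp_smul_eq_cexp_smul_exp_smul_sub (A : Matrix ι ι ℂ) (μ z : ℂ) :
    exp (z • A) = Complex.exp (z * μ) • exp (z • (A - μ • 1)) := by
  have hcomm : Commute ((z * μ) • (1 : Matrix ι ι ℂ)) (z • (A - μ • 1)) :=
    (Commute.one_left _).smul_left _
  have hsplit : z • A = (z * μ) • (1 : Matrix ι ι ℂ) + z • (A - μ • 1) := by module
  rw [hsplit, Matrix.exp_add_of_commute _ _ hcomm, ← Algebra.algebraMap_eq_smul_one,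
    Complex.exp_eq_exp_ℂ, Algebra.smul_def (exp (z * μ)), algebraMap_exp_comm]
  -- the two sides differ only in the topology `exp` is taken in: product vs. operator norm
  rfl

theorem tendsto_exp_smul_neg_mulVec_of_mem_maxGenEigenspace {A : Matrix ι ι ℂ} {μ : ℂ}
    (hμ : 0 < μ.re) {w : ι → ℂ} (hw : w ∈ Module.End.maxGenEigenspace (toLin' A) μ) :
    Tendsto (fun t : ℝ => exp ((t : ℂ) • -A) *ᵥ w) atTop (𝓝 0) := by
  obtain ⟨d, hd⟩ := (Module.End.mem_maxGenEigenspace _ _ _).1 hw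
  set N := A - μ • 1
  have hNd : N ^ d *ᵥ w = 0 := by
    have hN : toLin' A - μ • 1 = toLinAlgEquiv' N := by
      rw [map_sub, map_smul, map_one]; rfl
    rwa [hN, ← map_pow, toLinAlgEquiv'_apply] at hd
  have hsum : ∀ t : ℝ, exp ((t : ℂ) • -A) *ᵥ w = ∑ n ∈ Finset.range d,
      (Complex.exp (-(t * μ)) * (t : ℂ) ^ n) • (((-1 : ℂ) ^ n / n !) • (N ^ n *ᵥ w)) := by
    intro t
    rw [smul_neg, ← neg_smul, exp_smul_eq_cexp_smul_exp_smul_sub A μ, smul_mulVec,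
      exp_smul_mulVec_eq_sum N hNd, Finset.smul_sum]
    refine Finset.sum_congr rfl fun n _ => ?_
    rw [smul_smul, smul_smul]
    ring_nf
  simp_rw [hsum]
  simpa using tendsto_finsetSum (Finset.range d) fun n _ =>
    (tendsto_cexp_neg_mul_mul_pow_atTop hμ n).smul_const (((-1) ^ n / n ! : ℂ) • (N ^ n *ᵥ w))

theorem IsPositiveStable.tendsto_exp_smul_neg_mulVec {A : Matrix ι ι ℂ}
    (hA : A.IsPositiveStable) (v : ι → ℂ) :
    Tendsto (fun t : ℝ => exp ((t : ℂ) • -A) *ᵥ v) atTop (𝓝 0) := by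
  have hv : v ∈ ⨆ μ, Module.End.maxGenEigenspace (toLin' A) μ := by
    rw [Module.End.iSup_maxGenEigenspace_eq_top]; trivial
  refine Submodule.iSup_induction _
    (motive := fun v => Tendsto (fun t : ℝ => exp ((t : ℂ) • -A) *ᵥ v) atTop (𝓝 0)) hv
    (fun μ w hw => ?_) (by simp) (fun x y hx hy => by simpa [mulVec_add] using hx.add hy)
  rcases eq_or_ne w 0 with rfl | hw0
  · simp
  · exact tendsto_exp_smul_neg_mulVec_of_mem_maxGenEigenspace
      (hA.re_pos_of_mem_maxGenEigenspace hw hw0) hw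

theorem IsPositiveStable.tendsto_exp_smul_neg {A : Matrix ι ι ℂ} (hA : A.IsPositiveStable) :
    Tendsto (fun t : ℝ => exp ((t : ℂ) • -A)) atTop (𝓝 0) := by
  refine tendsto_pi_nhds.2 fun i => tendsto_pi_nhds.2 fun j => ?_
  simpa [mulVec_single_one, Function.comp_def] using
    ((continuous_apply i).tendsto _).comp (hA.tendsto_exp_smul_neg_mulVec (Pi.single j 1))

theorem tendsto_exp_smul_neg_of_isPositiveStable {A : Matrix ι ι ℝ}
    (hA : (A.map Complex.ofReal).IsPositiveStable) :
    Tendsto (fun t : ℝ => exp (t • -A)) atTop (𝓝 0) := by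
  have hcomplex : ∀ t : ℝ, exp ((t : ℂ) • -A.map Complex.ofReal) = (exp (t • -A)).map (↑) := by
    intro t
    have := map_exp (Complex.ofRealHom.mapMatrix : Matrix ι ι ℝ →+* Matrix ι ι ℂ)
      (continuous_id.matrix_map Complex.continuous_ofReal) (t • -A)
    have hmap : Complex.ofRealHom.mapMatrix (t • -A) = (t : ℂ) • -A.map Complex.ofReal := by
      ext i j; simp
    rw [hmap] at this
    exact this.symm
  have hre := ((continuous_id.matrix_map Complex.continuous_re).tendsto _).comp
    hA.tendsto_exp_smul_neg
  simp only [Function.comp_def, hcomplex] at hre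
  simpa [Function.comp_def] using hre

theorem eq_exp_smul_mulVec_add_integral {A : Matrix ι ι ℝ} {g X : ℝ → ι → ℝ} (hg : Continuous g)
    (hX : ∀ t, HasDerivAt X (A *ᵥ X t + g t) t) (T t : ℝ) :
    X t = exp ((t - T) • A) *ᵥ X T + ∫ s in T..t, exp ((t - s) • A) *ᵥ g s := by
  have hderiv : ∀ s, HasDerivAt (fun s => exp ((t - s) • A) *ᵥ X s)
      (exp ((t - s) • A) *ᵥ g s) s := by
    intro s
    have hE : HasDerivAt (fun s : ℝ => exp ((t - s) • A)) (-(exp ((t - s) • A) * A)) s := by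
      have := (hasDerivAt_exp_smul_const A (t - s)).scomp s ((hasDerivAt_id s).const_sub t)
      rw [neg_one_smul] at this
      exact this
    convert hE.matrix_mulVec (hX s) using 1
    rw [mulVec_add, neg_mulVec, ← mulVec_mulVec]
    abel
  have hcont : Continuous fun s => exp ((t - s) • A) *ᵥ g s :=
    (exp_continuous.comp ((continuous_const.sub continuous_id).smul continuous_const)).matrix_mulVec
      hg
  rw [intervalIntegral.integral_eq_sub_of_hasDerivAt (fun s _ => hderiv s)
    (hcont.intervalIntegrable T t)]
  simp

theorem norm_integral_exp_smul_mulVec_le {A : Matrix ι ι ℝ} {C α δ : ℝ} (hα : 0 < α)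
    (hdecay : ∀ τ : ℝ, 0 ≤ τ → ‖exp (τ • A)‖ ≤ C * Real.exp (-α * τ)) {g : ℝ → ι → ℝ}
    {T t : ℝ} (hTt : T ≤ t) (hgδ : ∀ s ∈ Set.Icc T t, ‖g s‖ ≤ δ) :
    ‖∫ s in T..t, exp ((t - s) • A) *ᵥ g s‖ ≤ C * δ / α := by
  have hC : 0 ≤ C := by simpa using (norm_nonneg _).trans (hdecay 0 le_rfl)
  have hδ : 0 ≤ δ := (norm_nonneg _).trans (hgδ T ⟨le_rfl, hTt⟩)
  calc ‖∫ s in T..t, exp ((t - s) • A) *ᵥ g s‖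
      ≤ ∫ s in T..t, C * δ * Real.exp (-α * (t - s)) := by
        refine intervalIntegral.norm_integral_le_of_norm_le hTt
          (Filter.Eventually.of_forall fun s hs => ?_)
          (Continuous.intervalIntegrable (by fun_prop) _ _)
        calc ‖exp ((t - s) • A) *ᵥ g s‖ ≤ ‖exp ((t - s) • A)‖ * ‖g s‖ :=
              linfty_opNorm_mulVec _ _
          _ ≤ C * Real.exp (-α * (t - s)) * δ := by
              gcongr
              · exact hdecay _ (sub_nonneg.2 hs.2)
              · exact hgδ s (Set.Ioc_subset_Icc_self hs)
          _ = C * δ * Real.exp (-α * (t - s)) := by ring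
    _ ≤ C * δ * α⁻¹ := by
        rw [intervalIntegral.integral_const_mul]
        exact mul_le_mul_of_nonneg_left (integral_exp_neg_mul_sub_le hα T t) (by positivity)
    _ = C * δ / α := by rw [div_eq_mul_inv]

theorem tendsto_zero_of_hasDerivAt_mulVec_add {A : Matrix ι ι ℝ}
    (hA : Tendsto (fun t : ℝ => exp (t • A)) atTop (𝓝 0)) {g X : ℝ → ι → ℝ}
    (hg : Continuous g) (hg0 : Tendsto g atTop (𝓝 0))
    (hX : ∀ t, HasDerivAt X (A *ᵥ X t + g t) t) :
    Tendsto X atTop (𝓝 0) := by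
  obtain ⟨C, hC, α, hα, hdecay⟩ := exists_norm_exp_smul_le_of_tendsto hA
  have hfree : ∀ T, Tendsto (fun t => exp ((t - T) • A) *ᵥ X T) atTop (𝓝 0) := fun T => by
    have hshift : Tendsto (fun t : ℝ => t - T) atTop atTop :=
      tendsto_atTop_add_const_right _ _ tendsto_id
    simpa [Function.comp_def] using
      ((continuous_id.matrix_mulVec continuous_const).tendsto 0).comp (hA.comp hshift)
  simp only [NormedAddGroup.tendsto_nhds_zero] at hg0 hfree ⊢
  intro ε hε
  obtain ⟨T, hT⟩ := eventually_atTop.1 (hg0 (ε * α / (2 * C)) (by positivity))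
  filter_upwards [hfree T (ε / 2) (half_pos hε), eventually_ge_atTop T] with t hfree_t hTt
  have hforced := norm_integral_exp_smul_mulVec_le hα hdecay hTt fun s hs => (hT s hs.1).le
  rw [eq_exp_smul_mulVec_add_integral hg hX T t]
  calc _ ≤ ‖exp ((t - T) • A) *ᵥ X T‖ + ‖∫ s in T..t, exp ((t - s) • A) *ᵥ g s‖ :=
        norm_add_le _ _
    _ < ε / 2 + C * (ε * α / (2 * C)) / α := add_lt_add_of_lt_of_le hfree_t hforced
    _ = ε := by field_simp; ring

end Matrix

theorem hasDerivAt_add_mulVec_of_mul_eq {ιL ιF : Type*} [Fintype ιL] [Fintype ιF]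
    {L11 : Matrix ιL ιL ℝ} {L21 : Matrix ιF ιL ℝ} {L22 : Matrix ιF ιF ℝ} {W : Matrix ιF ιL ℝ}
    (hW : L22 * W = L21) {xL : ℝ → ιL → ℝ} {xF : ℝ → ιF → ℝ}
    (hxL : ∀ t, HasDerivAt xL (-(L11 *ᵥ xL t)) t)
    (hxF : ∀ t, HasDerivAt xF (-(L22 *ᵥ xF t) - L21 *ᵥ xL t) t) (t : ℝ) :
    HasDerivAt (fun t => xF t + W *ᵥ xL t)
      (-L22 *ᵥ (xF t + W *ᵥ xL t) + -((W * L11) *ᵥ xL t)) t := by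
  refine ((hxF t).add ((hasDerivAt_const t W).matrix_mulVec (hxL t))).congr_deriv ?_
  rw [← hW, ← mulVec_mulVec, ← mulVec_mulVec, zero_mulVec, mulVec_neg, neg_mulVec, mulVec_add]
  abel

theorem followers_converge_to_leader_average_general
    {m k : ℕ}
    (L11 : Matrix (Fin m) (Fin m) ℝ)
    (L21 : Matrix (Fin k) (Fin m) ℝ)
    (L22 : Matrix (Fin k) (Fin k) ℝ)
    -- zero row sums of the full Laplacian L = [[L11, 0], [L21, L22]]
    (hrow1 : L11.mulVec (fun _ => 1) = 0)
    (hrow2 : L21.mulVec (fun _ => 1) + L22.mulVec (fun _ => 1) = 0)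
    -- L22 nonsingular
    (hinv : IsUnit L22.det)
    -- -L22 is Hurwitz: all complex eigenvalues of L22 have positive real part
    (hHurwitz : ∀ (μ : ℂ) (v : Fin k → ℂ), v ≠ 0 →
      (L22.map Complex.ofReal).mulVec v = μ • v → 0 < μ.re)
    (xL : ℝ → Fin m → ℝ) (xF : ℝ → Fin k → ℝ)
    (hxL : ∀ t, HasDerivAt xL (-(L11.mulVec (xL t))) t)
    (hxF : ∀ t, HasDerivAt xF (-(L22.mulVec (xF t)) - L21.mulVec (xL t)) t)
    -- the leader states converge to the average of their initial values
    (hLconv : Tendsto xL atTop (nhds (fun _ => (∑ i, xL 0 i) / m))) :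
    Tendsto xF atTop (nhds (fun _ => (∑ i, xL 0 i) / m)) := by
  set c := (∑ i, xL 0 i) / m
  set W := L22⁻¹ * L21
  have hW : L22 * W = L21 := by rw [← Matrix.mul_assoc, mul_nonsing_inv _ hinv, Matrix.one_mul]
  have hW1 : W *ᵥ (fun _ => 1) = -fun _ => 1 := by
    rw [← mulVec_mulVec, eq_neg_of_add_eq_zero_left hrow2, mulVec_neg, mulVec_mulVec,
      nonsing_inv_mul _ hinv, one_mulVec]
  have hconst {n : ℕ} : (fun _ : Fin n => c) = c • fun _ => 1 := by ext; simp
  have hxL_cont : Continuous xL := continuous_iff_continuousAt.2 fun t => (hxL t).continuousAt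
  have hmulVec_lim (M : Matrix (Fin k) (Fin m) ℝ) :
      Tendsto (fun t => M *ᵥ xL t) atTop (𝓝 (c • M *ᵥ fun _ => 1)) := by
    simpa [hconst, mulVec_smul, Function.comp_def] using
      ((continuous_const.matrix_mulVec continuous_id).tendsto _).comp hLconv
  have hX : Tendsto (fun t => xF t + W *ᵥ xL t) atTop (𝓝 0) := by
    refine tendsto_zero_of_hasDerivAt_mulVec_add (g := fun t => -((W * L11) *ᵥ xL t))
      (tendsto_exp_smul_neg_of_isPositiveStable hHurwitz)
      (continuous_const.matrix_mulVec hxL_cont).neg ?_ (hasDerivAt_add_mulVec_of_mul_eq hW hxL hxF)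
    simpa [← mulVec_mulVec, hrow1] using (hmulVec_lim (W * L11)).neg
  rw [hconst]
  simpa [hW1] using hX.sub (hmulVec_lim W)

/-- follower convergence in the block-decomposed consensus
dynamics `ẋ_L = -L₁₁ x_L`, `ẋ_F = -L₂₂ x_F - L₂₁ x_L`.  If the full Laplacian
has zero row sums, `L₂₂` is nonsingular and Hurwitz-stable, and `x_L(t)` tends
to the average of its initial values, then `x_F(t)` tends to the same
average. -/
theorem followers_converge_to_leader_average
    {m k : ℕ} (hm : 0 < m)
    (L11 : Matrix (Fin m) (Fin m) ℝ)
    (L21 : Matrix (Fin k) (Fin m) ℝ)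
    (L22 : Matrix (Fin k) (Fin k) ℝ)
    -- zero row sums of the full Laplacian L = [[L11, 0], [L21, L22]]
    (hrow1 : L11.mulVec (fun _ => 1) = 0)
    (hrow2 : L21.mulVec (fun _ => 1) + L22.mulVec (fun _ => 1) = 0)
    -- L22 nonsingular
    (hinv : IsUnit L22.det)
    -- -L22 is Hurwitz: all complex eigenvalues of L22 have positive real part
    (hHurwitz : ∀ (μ : ℂ) (v : Fin k → ℂ), v ≠ 0 →
      (L22.map Complex.ofReal).mulVec v = μ • v → 0 < μ.re)
    (xL : ℝ → Fin m → ℝ) (xF : ℝ → Fin k → ℝ)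
    (hxL : ∀ t, HasDerivAt xL (-(L11.mulVec (xL t))) t)
    (hxF : ∀ t, HasDerivAt xF (-(L22.mulVec (xF t)) - L21.mulVec (xL t)) t)
    -- the leader states converge to the average of their initial values
    (hLconv : Tendsto xL atTop (nhds (fun _ => (∑ i, xL 0 i) / m))) :
    Tendsto xF atTop (nhds (fun _ => (∑ i, xL 0 i) / m)) :=
  followers_converge_to_leader_average_general L11 L21 L22 hrow1 hrow2 hinv hHurwitz xL xF hxL hxF
    hLconv
end

section
/- Let G be a connected weighted graph with Fiedler vector v₂ (eigenvector of the second smallest Laplacian eigenvalue λ₂ > 0). Suppose B is a block of G containing only positive entries of v₂, connected to the rest of G through cut vertices i₁,…,i_q with corresponding values v₂(i₁),…,v₂(i_q), and let i* = argmin_k v₂(i_k). Then every vertex j ∈ B satisfies v₂(j) ≥ v₂(i*). -/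
open Matrix SimpleGraph

/-- The simple graph underlying the weighted adjacency matrix `W`. -/
def graphOfW {n : ℕ} (W : Matrix (Fin n) (Fin n) ℝ) : SimpleGraph (Fin n) :=
  SimpleGraph.fromRel (fun a b => W a b ≠ 0)

/-- A cut vertex: its removal disconnects the graph. -/
def IsCutVertex {V : Type*} (G : SimpleGraph V) (v : V) : Prop :=
  ¬ (G.induce {u : V | u ≠ v}).Connected

/-- A vertex set inducing a connected subgraph with no cut vertex of itself. -/
def IsBlockCandidate {V : Type*} (G : SimpleGraph V) (B : Set V) : Prop :=
  (G.induce B).Connected ∧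
    ∀ v ∈ B, (B \ {v}).Nonempty → (G.induce (B \ {v})).Connected

/-- A block: a maximal connected induced subgraph without cut vertices. -/
def IsBlock {V : Type*} (G : SimpleGraph V) (B : Set V) : Prop :=
  IsBlockCandidate G B ∧ ∀ B' : Set V, B ⊆ B' → IsBlockCandidate G B' → B' = B

/-! Let `S` be the set of vertices of `B` whose entry is below `v₂ i*`. None of them is a cut
vertex, and a vertex of a block that is not a cut vertex has all its neighbours in the block:
otherwise a path from such a neighbour back to the block avoiding that vertex would be an ear
enlarging the block. So every edge leaving `S` ends at a vertex with a larger entry. Summing the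
eigen-equation over `S`, the edges inside `S` cancel by symmetry and
`λ₂ ∑_{i ∈ S} v₂ i = ∑_{i ∈ S, k ∉ S} W i k (v₂ i - v₂ k) ≤ 0`, which forces `S = ∅` since the
entries on `B` are positive. -/

section Blocks

variable {V : Type*} {G : SimpleGraph V}

theorem SimpleGraph.connected_induce_of_isChain {l : List V} (hne : l ≠ [])
    (hl : l.IsChain G.Adj) : (G.induce {x | x ∈ l}).Connected := by
  have := (Walk.ofSupport l hne hl).connected_induce_support
  rwa [Walk.support_ofSupport] at this

theorem SimpleGraph.exists_isPath_of_preconnected_induce {s : Set V}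
    (hs : (G.induce s).Preconnected) {a b : V} (ha : a ∈ s) (hb : b ∈ s) :
    ∃ p : G.Walk a b, p.IsPath ∧ ∀ x ∈ p.support, x ∈ s := by
  classical
  obtain ⟨w⟩ := hs ⟨a, ha⟩ ⟨b, hb⟩
  have hsupp : ∀ x ∈ (w.bypass.map (Embedding.induce s).toHom).support, x ∈ s := by
    intro x hx
    rw [Walk.support_map] at hx
    obtain ⟨y, -, rfl⟩ := List.mem_map.mp hx
    exact y.2
  exact ⟨_, w.bypass_isPath.map Subtype.val_injective, hsupp⟩

theorem isBlockCandidate_pair {i j : V} (hij : G.Adj i j) : IsBlockCandidate G {i, j} := by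
  refine ⟨induce_pair_connected_of_adj hij, fun v hv _ => ?_⟩
  obtain ⟨w, hw⟩ : ∃ w, ({i, j} : Set V) \ {v} = {w} := by
    rcases hv with rfl | rfl
    · exact ⟨j, by ext x; grind [hij.ne]⟩
    · exact ⟨i, by ext x; grind [hij.ne]⟩
  rw [hw]
  exact Connected.of_subsingleton

theorem IsBlockCandidate.union_ear {B : Set V} (hB : IsBlockCandidate G B) {i c : V}
    {P : List V} (hi : i ∈ B) (hc : c ∈ B) (hic : i ≠ c)
    (hchain : (i :: (P ++ [c])).IsChain G.Adj) (hnodup : P.Nodup) (hPB : ∀ x ∈ P, x ∉ B) :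
    IsBlockCandidate G (B ∪ {x | x ∈ P}) := by
  have hiP : (i :: P).IsChain G.Adj := by
    rw [← List.cons_append] at hchain
    exact hchain.left_of_append
  have hPc : (P ++ [c]).IsChain G.Adj := hchain.tail
  have hiP_conn := connected_induce_of_isChain (List.cons_ne_nil _ _) hiP
  have hPc_conn := connected_induce_of_isChain (by simp) hPc
  refine ⟨?_, ?_⟩
  · have hset : B ∪ {x | x ∈ P} = B ∪ {x | x ∈ i :: P} := by ext x; grind
    rw [hset]
    exact induce_union_connected hB.1.preconnected hiP_conn.preconnected ⟨i, hi, by simp⟩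
  rintro v (hvB | hvP) -
  · have hvP : v ∉ P := fun h => hPB v h hvB
    by_cases hvi : v = i
    · subst hvi
      have hset : (B ∪ {x | x ∈ P}) \ {v} = B \ {v} ∪ {x | x ∈ P ++ [c]} := by
        ext x; grind
      rw [hset]
      exact induce_union_connected (hB.2 v hvB ⟨c, hc, hic.symm⟩).preconnected
        hPc_conn.preconnected ⟨c, ⟨hc, hic.symm⟩, by simp⟩
    · have hset : (B ∪ {x | x ∈ P}) \ {v} = B \ {v} ∪ {x | x ∈ i :: P} := by
        ext x; grind
      rw [hset]
      exact induce_union_connected (hB.2 v hvB ⟨i, hi, Ne.symm hvi⟩).preconnected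
        hiP_conn.preconnected ⟨i, ⟨hi, Ne.symm hvi⟩, by simp⟩
  · obtain ⟨P₁, P₂, rfl⟩ := List.append_of_mem hvP
    have hvP₁₂ : v ∉ P₁ ++ P₂ := (List.nodup_cons.mp (List.nodup_middle.mp hnodup)).1
    have hiP₁ : (i :: P₁).IsChain G.Adj := by
      rw [← List.cons_append] at hiP
      exact hiP.left_of_append
    have hP₂c : (P₂ ++ [c]).IsChain G.Adj := by
      rw [List.append_assoc, List.cons_append] at hPc
      exact hPc.right_of_append.tail
    have hset : (B ∪ {x | x ∈ P₁ ++ v :: P₂}) \ {v} =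
        B ∪ {x | x ∈ i :: P₁} ∪ {x | x ∈ P₂ ++ [c]} := by
      ext x; grind
    rw [hset]
    refine induce_union_connected ?_
      (connected_induce_of_isChain (by simp) hP₂c).preconnected ⟨c, Or.inl hc, by simp⟩
    exact (induce_union_connected hB.1.preconnected
      (connected_induce_of_isChain (by simp) hiP₁).preconnected ⟨i, hi, by simp⟩).preconnected

theorem exists_ear_of_not_isCutVertex {B : Set V} {i j b : V} (hi : ¬ IsCutVertex G i)
    (hj : j ∉ B) (hji : j ≠ i) (hb : b ∈ B) (hbi : b ≠ i) :
    ∃ P c, c ∈ B ∧ c ≠ i ∧ (j :: (P ++ [c])).IsChain G.Adj ∧ (j :: P).Nodup ∧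
      ∀ x ∈ j :: P, x ∉ B := by
  classical
  obtain ⟨p, hp, hpi⟩ := exists_isPath_of_preconnected_induce (not_not.mp hi).preconnected
    (s := {u | u ≠ i}) hji hbi
  have hsupp := p.cons_tail_support.symm
  have hbL : b ∈ p.support.tail := by
    have := p.end_mem_support
    rw [hsupp, List.mem_cons] at this
    exact this.resolve_left (by rintro rfl; exact hj hb)
  obtain ⟨c, hc⟩ := Option.isSome_iff_exists.mp
    (List.find?_isSome.mpr ⟨b, hbL, decide_eq_true hb⟩ : (p.support.tail.find? (· ∈ B)).isSome)
  obtain ⟨hcB, P, Q, hPQ, hPB⟩ := List.find?_eq_some_iff_append.mp hc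
  rw [hPQ] at hsupp
  refine ⟨P, c, of_decide_eq_true hcB, hpi c (by simp [hsupp]), ?_, ?_, ?_⟩
  · have := p.isChain_adj_support
    rw [hsupp, show j :: (P ++ c :: Q) = j :: (P ++ [c]) ++ Q by simp] at this
    exact this.left_of_append
  · have := hp.support_nodup
    rw [hsupp] at this
    exact this.sublist (by simp)
  · simp only [List.mem_cons, forall_eq_or_imp]
    exact ⟨hj, fun x hx => by simpa using hPB x hx⟩

theorem IsBlock.mem_of_adj_of_not_isCutVertex {B : Set V} (hB : IsBlock G B) {i j : V}
    (hi : i ∈ B) (hi' : ¬ IsCutVertex G i) (hij : G.Adj i j) : j ∈ B := by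
  by_contra hj
  by_cases hBi : ∃ b ∈ B, b ≠ i
  · obtain ⟨b, hb, hbi⟩ := hBi
    obtain ⟨P, c, hc, hci, hchain, hnodup, hPB⟩ :=
      exists_ear_of_not_isCutVertex hi' hj hij.ne.symm hb hbi
    have hear := hB.1.union_ear hi hc hci.symm (hchain.cons (by simpa using hij)) hnodup hPB
    have := hB.2 _ Set.subset_union_left hear
    exact hj (this ▸ Or.inr (List.mem_cons_self ..))
  · push Not at hBi
    have := hB.2 {i, j} (fun x hx => by simp [hBi x hx]) (isBlockCandidate_pair hij)
    exact hj (this ▸ by simp)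

end Blocks

section Laplacian

variable {n : ℕ} {W : Matrix (Fin n) (Fin n) ℝ}

theorem lapW_mulVec_apply (v : Fin n → ℝ) (i : Fin n) :
    (lapW W *ᵥ v) i = ∑ k, W i k * (v i - v k) := by
  rw [lapW, sub_mulVec, Pi.sub_apply, mulVec_diagonal]
  simp only [mulVec, dotProduct, mul_sub, Finset.sum_sub_distrib, Finset.sum_mul]

theorem sum_sum_mul_sub_eq_zero (hsym : W.IsSymm) (S : Finset (Fin n)) (v : Fin n → ℝ) :
    ∑ i ∈ S, ∑ k ∈ S, W i k * (v i - v k) = 0 := by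
  have hanti : ∑ i ∈ S, ∑ k ∈ S, W i k * (v i - v k) =
      -∑ i ∈ S, ∑ k ∈ S, W i k * (v i - v k) := by
    conv_lhs => rw [Finset.sum_comm]
    rw [← Finset.sum_neg_distrib]
    refine Finset.sum_congr rfl fun k _ => ?_
    rw [← Finset.sum_neg_distrib]
    refine Finset.sum_congr rfl fun i _ => ?_
    rw [hsym.apply k i]
    ring
  linarith

theorem mul_sum_eq_sum_boundary (hsym : W.IsSymm) {μ : ℝ} {v : Fin n → ℝ}
    (hev : lapW W *ᵥ v = μ • v) (S : Finset (Fin n)) :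
    μ * ∑ i ∈ S, v i = ∑ i ∈ S, ∑ k ∈ Sᶜ, W i k * (v i - v k) := by
  calc μ * ∑ i ∈ S, v i = ∑ i ∈ S, ∑ k, W i k * (v i - v k) := by
        rw [Finset.mul_sum]
        refine Finset.sum_congr rfl fun i _ => ?_
        rw [← lapW_mulVec_apply, hev, Pi.smul_apply, smul_eq_mul]
    _ = ∑ i ∈ S, ∑ k ∈ S, W i k * (v i - v k) + ∑ i ∈ S, ∑ k ∈ Sᶜ, W i k * (v i - v k) := by
        rw [← Finset.sum_add_distrib]
        exact Finset.sum_congr rfl fun i _ => (Finset.sum_add_sum_compl S _).symm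
    _ = _ := by rw [sum_sum_mul_sub_eq_zero hsym, zero_add]

theorem mul_sum_nonpos_of_le_on_boundary (hsym : W.IsSymm) (hnonneg : ∀ i j, 0 ≤ W i j)
    {μ : ℝ} {v : Fin n → ℝ} (hev : lapW W *ᵥ v = μ • v) {S : Finset (Fin n)}
    (hS : ∀ i ∈ S, ∀ k ∉ S, W i k ≠ 0 → v i ≤ v k) :
    μ * ∑ i ∈ S, v i ≤ 0 := by
  rw [mul_sum_eq_sum_boundary hsym hev]
  refine Finset.sum_nonpos fun i hi => Finset.sum_nonpos fun k hk => ?_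
  rcases eq_or_ne (W i k) 0 with hW | hW
  · simp [hW]
  · exact mul_nonpos_of_nonneg_of_nonpos (hnonneg i k)
      (sub_nonpos.mpr (hS i hi k (Finset.mem_compl.mp hk) hW))

end Laplacian

theorem fiedler_monotone_in_positive_block_general
    {n : ℕ} (W : Matrix (Fin n) (Fin n) ℝ)
    (hsym : W.IsSymm) (hnonneg : ∀ i j, 0 ≤ W i j)
    (lam2 : ℝ) (hlam2pos : 0 < lam2)
    (v2 : Fin n → ℝ)
    (hev : (lapW W).mulVec v2 = lam2 • v2)
    (B : Set (Fin n)) (hB : IsBlock (graphOfW W) B)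
    -- B is a positive block
    (hpos : ∀ i ∈ B, 0 < v2 i)
    (istar : Fin n)
    -- i* minimizes v₂ among the cut vertices contained in B
    (hmincut : ∀ c ∈ B, IsCutVertex (graphOfW W) c → v2 istar ≤ v2 c) :
    ∀ j ∈ B, v2 istar ≤ v2 j := by
  classical
  by_contra! ⟨j, hjB, hj⟩
  set S := Finset.univ.filter fun x => x ∈ B ∧ v2 x < v2 istar
  have hS : ∀ i ∈ S, ∀ k ∉ S, W i k ≠ 0 → v2 i ≤ v2 k := by
    intro i hi k hk hW
    simp only [S, Finset.mem_filter, Finset.mem_univ, true_and, not_and, not_lt] at hi hk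
    have hadj : (graphOfW W).Adj i k := by
      refine (fromRel_adj _ i k).mpr ⟨?_, Or.inl hW⟩
      rintro rfl
      exact (hk hi.1).not_gt hi.2
    have hkB := hB.mem_of_adj_of_not_isCutVertex hi.1
      (fun hcut => (hmincut i hi.1 hcut).not_gt hi.2) hadj
    linarith [hk hkB]
  have hS_pos : 0 < lam2 * ∑ i ∈ S, v2 i :=
    mul_pos hlam2pos (Finset.sum_pos (fun i hi => hpos i (Finset.mem_filter.mp hi).2.1)
      ⟨j, by simp [S, hjB, hj]⟩)
  exact (mul_sum_nonpos_of_le_on_boundary hsym hnonneg hev hS).not_gt hS_pos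

/-- monotonicity of the Fiedler vector within a positive block.
If `B` is a block all of whose vertices carry strictly positive Fiedler
entries, and `i*` is the cut vertex of `G` lying in `B` with minimal Fiedler
entry among the cut vertices in `B`, then every vertex of `B` has Fiedler
entry at least `v₂ i*`. -/
theorem fiedler_monotone_in_positive_block
    {n : ℕ} (W : Matrix (Fin n) (Fin n) ℝ)
    (hsym : W.IsSymm) (hnonneg : ∀ i j, 0 ≤ W i j)
    (hconn : connectedW W)
    (lam2 : ℝ) (hlam2pos : 0 < lam2)
    (hlam2 : IsLeast {μ : ℝ | μ ≠ 0 ∧ ∃ w : Fin n → ℝ, w ≠ 0 ∧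
      (lapW W).mulVec w = μ • w} lam2)
    (v2 : Fin n → ℝ) (hv2 : v2 ≠ 0)
    (hev : (lapW W).mulVec v2 = lam2 • v2)
    (B : Set (Fin n)) (hB : IsBlock (graphOfW W) B)
    -- B is a positive block
    (hpos : ∀ i ∈ B, 0 < v2 i)
    (istar : Fin n) (histar : istar ∈ B) (hcut : IsCutVertex (graphOfW W) istar)
    -- i* minimizes v₂ among the cut vertices contained in B
    (hmincut : ∀ c ∈ B, IsCutVertex (graphOfW W) c → v2 istar ≤ v2 c) :
    ∀ j ∈ B, v2 istar ≤ v2 j :=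
  fiedler_monotone_in_positive_block_general W hsym hnonneg lam2 hlam2pos v2 hev B hB hpos istar
    hmincut
end
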